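/- arXiv:0810.1011 — 6 statements merged into one kernel-verified Lean document; each statement's English description precedes it below -/
import Mathlib

section
/- Generalized Cauchy–Binet (Andréief) identity: for a measure space (E, B, m) and measurable functions φ_i, ψ_j (1 ≤ i,j ≤ n) such that each product φ_i ψ_j is integrable, det(∫_E φ_i(x) ψ_j(x) dm(x))_{n×n} = (1/n!) ∫_{E^n} det(φ_i(x_j))_{n×n} det(ψ_i(x_j))_{n×n} ∏_{k=1}^n dm(x_k). -/
open MeasureTheory

/-- generalized Cauchy–Binet (Andréief) identity. -/
theorem stmt1 {E : Type*} [MeasurableSpace E] (m : Measure E) [SigmaFinite m] (n : ℕ)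
    (φ ψ : Fin n → E → ℝ)
    (hφ : ∀ i, Measurable (φ i)) (hψ : ∀ j, Measurable (ψ j))
    (hint : ∀ i j, Integrable (fun x => φ i x * ψ j x) m) :
    Matrix.det (Matrix.of fun i j : Fin n => ∫ x, φ i x * ψ j x ∂m)
      = (1 / (Nat.factorial n) : ℝ) *
        ∫ x : Fin n → E,
          (Matrix.det (Matrix.of fun i j : Fin n => φ i (x j)))
            * Matrix.det (Matrix.of fun i j : Fin n => ψ i (x j))
          ∂(Measure.pi fun _ : Fin n => m) := by
  classical
  letI : MeasureSpace E := ⟨m⟩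
  have hPi : (Measure.pi fun _ : Fin n => m) = (volume : Measure (Fin n → E)) :=
    (volume_pi).symm
  set A : Matrix (Fin n) (Fin n) ℝ := Matrix.of fun i j => ∫ x, φ i x * ψ j x with hA
  set ε : Equiv.Perm (Fin n) → ℝ := fun σ => ((Equiv.Perm.sign σ : ℤ) : ℝ) with hε
  have hε2 : ∀ σ, ε σ * ε σ = 1 := by
    intro σ
    rw [hε]
    rw [← Int.cast_mul, ← Units.val_mul, ← sq, Int.units_sq]
    norm_num
  have hεmul : ∀ σ τ, ε (σ * τ) = ε σ * ε τ := by
    intro σ τ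
    simp [hε, ← Int.cast_mul]
  have hInt : ∀ σ τ : Equiv.Perm (Fin n),
      Integrable (fun x : Fin n → E => ∏ j, (φ (σ j) (x j) * ψ (τ j) (x j)))
        (volume : Measure (Fin n → E)) := by
    intro σ τ
    exact Integrable.fintype_prod (f := fun j y => φ (σ j) y * ψ (τ j) y)
      (fun j => hint _ _)
  have expand : ∀ x : Fin n → E,
      (Matrix.det (Matrix.of fun i j : Fin n => φ i (x j)))
        * Matrix.det (Matrix.of fun i j : Fin n => ψ i (x j))
      = ∑ σ : Equiv.Perm (Fin n), ∑ τ : Equiv.Perm (Fin n),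
          (ε σ * ε τ) * ∏ j, (φ (σ j) (x j) * ψ (τ j) (x j)) := by
    intro x
    rw [Matrix.det_apply', Matrix.det_apply', Finset.sum_mul_sum]
    refine Finset.sum_congr rfl fun σ _ => Finset.sum_congr rfl fun τ _ => ?_
    simp only [Matrix.of_apply, Finset.prod_mul_distrib, hε]
    ring
  have step1 : ∫ x : Fin n → E,
      (Matrix.det (Matrix.of fun i j : Fin n => φ i (x j)))
        * Matrix.det (Matrix.of fun i j : Fin n => ψ i (x j))
      = ∑ σ : Equiv.Perm (Fin n), ∑ τ : Equiv.Perm (Fin n),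
          (ε σ * ε τ) * ∏ j, A (σ j) (τ j) := by
    simp_rw [expand]
    rw [integral_finset_sum _ fun σ _ =>
      integrable_finset_sum _ fun τ _ => (hInt σ τ).const_mul _]
    refine Finset.sum_congr rfl fun σ _ => ?_
    rw [integral_finset_sum _ fun τ _ => (hInt σ τ).const_mul _]
    refine Finset.sum_congr rfl fun τ _ => ?_
    rw [integral_const_mul]
    congr 1
    rw [integral_fintype_prod_volume_eq_prod (ι := Fin n) (fun j y => φ (σ j) y * ψ (τ j) y)]
    rfl
  have inner : ∀ σ : Equiv.Perm (Fin n),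
      ∑ τ : Equiv.Perm (Fin n), (ε σ * ε τ) * ∏ j, A (σ j) (τ j) = A.det := by
    intro σ
    have hb := Equiv.sum_comp (Equiv.mulRight σ)
      (fun τ : Equiv.Perm (Fin n) => (ε σ * ε τ) * ∏ j, A (σ j) (τ j))
    rw [← hb]
    have : ∀ ρ : Equiv.Perm (Fin n),
        (ε σ * ε (ρ * σ)) * ∏ j, A (σ j) ((ρ * σ) j)
          = ε ρ * ∏ i, A i (ρ i) := by
      intro ρ
      have h1 : ∏ j, A (σ j) ((ρ * σ) j) = ∏ i, A i (ρ i) := by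
        simpa [Equiv.Perm.mul_apply] using
          Equiv.prod_comp σ (fun i => A i (ρ i))
      rw [h1, hεmul]
      calc ε σ * (ε ρ * ε σ) * ∏ i, A i (ρ i)
          = (ε σ * ε σ) * (ε ρ * ∏ i, A i (ρ i)) := by ring
        _ = ε ρ * ∏ i, A i (ρ i) := by rw [hε2 σ, one_mul]
    simp only [Equiv.coe_mulRight, this]
    rw [← Matrix.det_transpose, Matrix.det_apply']
    rfl
  have total : ∑ σ : Equiv.Perm (Fin n), ∑ τ : Equiv.Perm (Fin n),
      (ε σ * ε τ) * ∏ j, A (σ j) (τ j) = (Nat.factorial n : ℝ) * A.det := by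
    simp only [inner, Finset.sum_const, Finset.card_univ, Fintype.card_perm,
      Fintype.card_fin, nsmul_eq_mul]
  rw [hPi, step1, total]
  have hfac : (Nat.factorial n : ℝ) ≠ 0 := Nat.cast_ne_zero.mpr (Nat.factorial_ne_zero n)
  rw [show Matrix.det (Matrix.of fun i j : Fin n => ∫ x, φ i x * ψ j x ∂m) = A.det from rfl]
  field_simp
end

section
/- The number of integer points in the type-A Gelfand–Tsetlin polytope GT_n(λ), for λ ∈ Z^n with λ_1 ≥ ... ≥ λ_n, equals the Weyl dimension formula ∏_{1≤i<j≤n} (λ_i − λ_j + j − i)/(j − i). -/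
open Finset Polynomial Matrix

/-- An integer Gelfand–Tsetlin pattern of size `n`, encoded as a function on
`Fin n × Fin n`: `x (k, j)` is the `(j+1)`-st entry of the row of length `k+1`;
entries with `j > k` are padded by `0`, and consecutive rows interlace. -/
def IsGTPatternZ (n : ℕ) (x : Fin n × Fin n → ℤ) : Prop :=
  (∀ k j : Fin n, (k : ℕ) < (j : ℕ) → x (k, j) = 0) ∧
  (∀ k j : Fin n, ∀ hk : (k : ℕ) + 1 < n, ∀ hj : (j : ℕ) ≤ (k : ℕ),
    x (k, j) ≤ x (⟨(k : ℕ) + 1, hk⟩, j) ∧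
    x (⟨(k : ℕ) + 1, hk⟩, ⟨(j : ℕ) + 1, by omega⟩) ≤ x (k, j))

abbrev GTP (n : ℕ) (lam : Fin n → ℤ) : Type :=
  {x : Fin n × Fin n → ℤ //
    IsGTPatternZ n x ∧ ∀ k j : Fin n, (k : ℕ) = n - 1 → x (k, j) = lam j}

noncomputable abbrev SFin (N : ℕ) (lam : Fin (N+1) → ℤ) : Finset (Fin N → ℤ) :=
  Fintype.piFinset fun i => Finset.Icc (lam i.succ) (lam i.castSucc)

def res (N : ℕ) (x : Fin (N+1) × Fin (N+1) → ℤ) : Fin N × Fin N → ℤ :=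
  fun p => x (p.1.castSucc, p.2.castSucc)

def topRow (N : ℕ) (x : Fin (N+1) × Fin (N+1) → ℤ) : Fin N → ℤ :=
  fun j => x (⟨N-1, by omega⟩, j.castSucc)

def ext1 (N : ℕ) (lam : Fin (N+1) → ℤ) (y : Fin N × Fin N → ℤ) :
    Fin (N+1) × Fin (N+1) → ℤ := fun p =>
  if hk : (p.1 : ℕ) < N then
    (if hj : (p.2 : ℕ) < N then y (⟨p.1, hk⟩, ⟨p.2, hj⟩) else 0)
  else lam p.2

lemma cast_lt1 {N : ℕ} (k : Fin N) : ((k.castSucc : Fin (N+1)) : ℕ) + 1 < N + 1 := by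
  have := k.isLt; simp only [Fin.coe_castSucc]; omega

section
variable (N : ℕ) (lam : Fin (N+1) → ℤ)

lemma topRow_mem (x : Fin (N+1) × Fin (N+1) → ℤ)
    (hx : IsGTPatternZ (N+1) x ∧ ∀ k j : Fin (N+1), (k : ℕ) = (N+1) - 1 → x (k, j) = lam j) :
    topRow N x ∈ SFin N lam := by
  rw [Fintype.mem_piFinset]
  intro i
  rw [Finset.mem_Icc]
  have hiN : (i:ℕ) < N := i.isLt
  have hN : 1 ≤ N := by omega
  have hk : ((⟨N-1, by omega⟩ : Fin (N+1)) : ℕ) + 1 < N + 1 := by show N-1+1 < N+1; omega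
  have hint := hx.1.2 ⟨N-1, by omega⟩ i.castSucc hk
    (by show (i.castSucc : ℕ) ≤ N-1; simp only [Fin.coe_castSucc]; omega)
  have htop1 : x (⟨((⟨N-1, by omega⟩ : Fin (N+1)) : ℕ)+1, hk⟩, i.castSucc) = lam i.castSucc :=
    hx.2 _ i.castSucc (by show N-1+1 = (N+1)-1; omega)
  have htop2 : x (⟨((⟨N-1, by omega⟩ : Fin (N+1)) : ℕ)+1, hk⟩, i.succ) = lam i.succ :=
    hx.2 _ i.succ (by show N-1+1 = (N+1)-1; omega)
  constructor
  · exact le_trans (le_of_eq htop2.symm) hint.2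
  · exact le_trans hint.1 (le_of_eq htop1)

lemma res_prop (x : Fin (N+1) × Fin (N+1) → ℤ)
    (hx : IsGTPatternZ (N+1) x ∧ ∀ k j : Fin (N+1), (k : ℕ) = (N+1) - 1 → x (k, j) = lam j) :
    IsGTPatternZ N (res N x) ∧
      ∀ k j : Fin N, (k : ℕ) = N - 1 → (res N x) (k, j) = topRow N x j := by
  refine ⟨⟨?_, ?_⟩, ?_⟩
  · intro k j hkj
    exact hx.1.1 k.castSucc j.castSucc (by simpa using hkj)
  · intro k j hk hj
    have h := hx.1.2 k.castSucc j.castSucc (cast_lt1 k) (by simpa using hj)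
    have e1 : (⟨((k.castSucc : Fin (N+1)) : ℕ)+1, cast_lt1 k⟩ : Fin (N+1))
        = (⟨(k:ℕ)+1, hk⟩ : Fin N).castSucc := by
      apply Fin.ext; simp
    have e2 : (⟨((j.castSucc : Fin (N+1)) : ℕ)+1, cast_lt1 j⟩ : Fin (N+1))
        = (⟨(j:ℕ)+1, by omega⟩ : Fin N).castSucc := by
      apply Fin.ext; simp
    constructor
    · have h1 := h.1
      rw [e1] at h1
      exact h1
    · have h2 := h.2
      rw [e1, e2] at h2
      exact h2
  · intro k j hk
    show x (k.castSucc, j.castSucc) = x (⟨N-1, by omega⟩, j.castSucc)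
    congr 2
    apply Fin.ext
    simp [hk]

lemma ext1_prop (μ : Fin N → ℤ) (hμ : μ ∈ SFin N lam) (y : Fin N × Fin N → ℤ)
    (hy : IsGTPatternZ N y ∧ ∀ k j : Fin N, (k : ℕ) = N - 1 → y (k, j) = μ j) :
    IsGTPatternZ (N+1) (ext1 N lam y) ∧
      ∀ k j : Fin (N+1), (k : ℕ) = (N+1) - 1 → (ext1 N lam y) (k, j) = lam j := by
  rw [Fintype.mem_piFinset] at hμ
  refine ⟨⟨?_, ?_⟩, ?_⟩
  · -- padding
    intro k j hkj
    have hkb := k.isLt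
    have hjb := j.isLt
    show (if hk : (k : ℕ) < N then
        (if hj : (j : ℕ) < N then y (⟨k, hk⟩, ⟨j, hj⟩) else 0) else lam j) = 0
    split_ifs with h1 h2
    · exact hy.1.1 _ _ hkj
    · rfl
    · exfalso; omega
  · -- interlacing
    intro k j hk hj
    have hkN : (k:ℕ) < N := by omega
    have hjN : (j:ℕ) < N := by omega
    rcases lt_or_ge ((k:ℕ)+1) N with hk1 | hk1
    · have h := hy.1.2 ⟨k, hkN⟩ ⟨j, hjN⟩ hk1 hj
      constructor
      · have h1 := h.1
        show (if hc : (k : ℕ) < N then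
            (if hj : (j : ℕ) < N then y (⟨k, hc⟩, ⟨j, hj⟩) else 0) else lam j)
          ≤ (if hc : ((⟨(k:ℕ)+1, hk⟩ : Fin (N+1)) : ℕ) < N then
            (if hj : (j : ℕ) < N then y (⟨(k:ℕ)+1, hc⟩, ⟨j, hj⟩) else 0) else lam j)
        rw [dif_pos hkN, dif_pos hjN, dif_pos (show (k:ℕ)+1 < N from hk1), dif_pos hjN]
        exact h1
      · have h2 := h.2
        show (if hc : ((⟨(k:ℕ)+1, hk⟩ : Fin (N+1)) : ℕ) < N then
            (if hj : ((⟨(j:ℕ)+1, by omega⟩ : Fin (N+1)) : ℕ) < N then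
              y (⟨(k:ℕ)+1, hc⟩, ⟨(j:ℕ)+1, hj⟩) else 0) else lam ⟨(j:ℕ)+1, by omega⟩)
          ≤ (if hc : (k : ℕ) < N then
            (if hj : (j : ℕ) < N then y (⟨k, hc⟩, ⟨j, hj⟩) else 0) else lam j)
        rw [dif_pos (show (k:ℕ)+1 < N from hk1), dif_pos (show (j:ℕ)+1 < N by omega),
          dif_pos hkN, dif_pos hjN]
        exact h2
    · have hkN1 : (k:ℕ) = N - 1 := by omega
      have hyt : y (⟨k, hkN⟩, ⟨j, hjN⟩) = μ ⟨j, hjN⟩ := hy.2 _ _ (by show (k:ℕ) = N-1; omega)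
      have hμj := hμ ⟨j, hjN⟩
      rw [Finset.mem_Icc] at hμj
      constructor
      · show (if hc : (k : ℕ) < N then
            (if hj : (j : ℕ) < N then y (⟨k, hc⟩, ⟨j, hj⟩) else 0) else lam j)
          ≤ (if hc : ((⟨(k:ℕ)+1, hk⟩ : Fin (N+1)) : ℕ) < N then
            (if hj : (j : ℕ) < N then y (⟨(k:ℕ)+1, hc⟩, ⟨j, hj⟩) else 0) else lam j)
        rw [dif_pos hkN, dif_pos hjN, dif_neg (show ¬ (k:ℕ)+1 < N by omega)]
        have e : lam j = lam ((⟨j, hjN⟩ : Fin N).castSucc) :=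
          congrArg lam (Fin.ext (by simp))
        rw [hyt, e]
        exact hμj.2
      · show (if hc : ((⟨(k:ℕ)+1, hk⟩ : Fin (N+1)) : ℕ) < N then
            (if hj : ((⟨(j:ℕ)+1, by omega⟩ : Fin (N+1)) : ℕ) < N then
              y (⟨(k:ℕ)+1, hc⟩, ⟨(j:ℕ)+1, hj⟩) else 0) else lam ⟨(j:ℕ)+1, by omega⟩)
          ≤ (if hc : (k : ℕ) < N then
            (if hj : (j : ℕ) < N then y (⟨k, hc⟩, ⟨j, hj⟩) else 0) else lam j)
        rw [dif_neg (show ¬ (k:ℕ)+1 < N by omega), dif_pos hkN, dif_pos hjN]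
        have e : lam (⟨(j:ℕ)+1, by omega⟩ : Fin (N+1)) = lam ((⟨j, hjN⟩ : Fin N).succ) :=
          congrArg lam (Fin.ext (by simp))
        rw [hyt, e]
        exact hμj.1
  · -- top row
    intro k j hk
    show (if hc : (k : ℕ) < N then
        (if hj : (j : ℕ) < N then y (⟨k, hc⟩, ⟨j, hj⟩) else 0) else lam j) = lam j
    rw [dif_neg (by omega)]
end

lemma sigma_subtype_eq {α β : Type*} {P : α → Prop} {Q : α → β → Prop}
    {a a' : {x // P x}} {b : {y // Q a.1 y}} {b' : {y // Q a'.1 y}}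
    (h1 : a.1 = a'.1) (h2 : b.1 = b'.1) :
    (⟨a, b⟩ : Σ x : {x // P x}, {y // Q x.1 y}) = ⟨a', b'⟩ := by
  obtain ⟨av, ap⟩ := a; obtain ⟨av', ap'⟩ := a'
  cases h1
  obtain ⟨bv, bp⟩ := b; obtain ⟨bv', bp'⟩ := b'
  cases h2
  rfl

def gtEquiv (N : ℕ) (lam : Fin (N+1) → ℤ) :
    GTP (N+1) lam ≃ Σ μ : ↥(SFin N lam), GTP N (μ : Fin N → ℤ) where
  toFun x := ⟨⟨topRow N x.1, topRow_mem N lam x.1 x.2⟩, ⟨res N x.1, res_prop N lam x.1 x.2⟩⟩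
  invFun q := ⟨ext1 N lam q.2.1, ext1_prop N lam q.1.1 q.1.2 q.2.1 q.2.2⟩
  left_inv x := by
    apply Subtype.ext
    funext p
    obtain ⟨k, j⟩ := p
    show (if hc : (k : ℕ) < N then
        (if hj : (j : ℕ) < N then res N x.1 (⟨k, hc⟩, ⟨j, hj⟩) else 0) else lam j) = x.1 (k, j)
    split_ifs with h1 h2
    · exact congrArg x.1 (Prod.ext (Fin.ext (by simp)) (Fin.ext (by simp)))
    · exact (x.2.1.1 k j (by omega)).symm
    · exact (x.2.2 k j (by omega)).symm
  right_inv q := by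
    obtain ⟨⟨μ, hμ⟩, y, hy⟩ := q
    dsimp only
    refine sigma_subtype_eq (P := fun ν => ν ∈ SFin N lam)
      (Q := fun ν z => IsGTPatternZ N z ∧ ∀ k j : Fin N, (k:ℕ) = N - 1 → z (k, j) = ν j)
      ?_ ?_
    · funext j
      have hjN : (j:ℕ) < N := j.isLt
      show (if hc : N-1 < N then
          (if hj2 : ((j.castSucc : Fin (N+1)) : ℕ) < N then y (⟨N-1, hc⟩, ⟨(j.castSucc:ℕ), hj2⟩)
            else 0) else lam j.castSucc) = μ j
      rw [dif_pos (show N-1 < N by omega),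
        dif_pos (show ((j.castSucc : Fin (N+1)) : ℕ) < N by simpa using hjN)]
      rw [hy.2 _ _ (show N-1 = N-1 from rfl)]
      exact congrArg μ (Fin.ext (by simp))
    · funext p
      obtain ⟨a, b⟩ := p
      show (if hc : ((a.castSucc : Fin (N+1)):ℕ) < N then
          (if hj : ((b.castSucc : Fin (N+1)):ℕ) < N then
            y (⟨(a.castSucc:ℕ), hc⟩, ⟨(b.castSucc:ℕ), hj⟩) else 0)
          else lam b.castSucc) = y (a, b)
      rw [dif_pos (by simpa using a.isLt), dif_pos (by simpa using b.isLt)]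
      exact congrArg y (Prod.ext (Fin.ext (by simp)) (Fin.ext (by simp)))

lemma gtp_finite : ∀ (n : ℕ) (lam : Fin n → ℤ), Finite (GTP n lam) := by
  intro n
  induction n with
  | zero =>
    intro lam
    have hs : Subsingleton (GTP 0 lam) :=
      ⟨fun a b => Subtype.ext (funext fun p => p.1.elim0)⟩
    exact @Finite.of_subsingleton _ hs
  | succ N ih =>
    intro lam
    haveI : ∀ μ : ↥(SFin N lam), Finite (GTP N (μ : Fin N → ℤ)) := fun μ => ih _
    exact Finite.of_equiv _ (gtEquiv N lam).symm

lemma card_step (N : ℕ) (lam : Fin (N+1) → ℤ) :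
    Nat.card (GTP (N+1) lam) = ∑ μ ∈ SFin N lam, Nat.card (GTP N μ) := by
  classical
  rw [Nat.card_congr (gtEquiv N lam)]
  haveI : ∀ μ : ↥(SFin N lam), Finite (GTP N (μ : Fin N → ℤ)) := fun μ => gtp_finite N _
  haveI inst : ∀ μ : ↥(SFin N lam), Fintype (GTP N (μ : Fin N → ℤ)) :=
    fun μ => Fintype.ofFinite _
  rw [Nat.card_eq_fintype_card, Fintype.card_sigma]
  rw [← Finset.sum_coe_sort (SFin N lam) (fun μ => Nat.card (GTP N μ))]
  exact Finset.sum_congr rfl fun μ _ => (Nat.card_eq_fintype_card).symm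

lemma card_zero (lam : Fin 0 → ℤ) : Nat.card (GTP 0 lam) = 1 := by
  haveI : Unique (GTP 0 lam) :=
    { default := ⟨fun _ => 0, ⟨fun k => k.elim0, fun k => k.elim0⟩, fun k => k.elim0⟩
      uniq := fun a => Subtype.ext (funext fun p => p.1.elim0) }
  exact Nat.card_unique

lemma mem_SFin_antitone (N : ℕ) (lam : Fin (N+1) → ℤ) (hlam : Antitone lam)
    {μ : Fin N → ℤ} (hμ : μ ∈ SFin N lam) : Antitone μ := by
  rw [Fintype.mem_piFinset] at hμ
  cases N with
  | zero => intro a b _; exact a.elim0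
  | succ M =>
    rw [Fin.antitone_iff_succ_le]
    intro a
    have h1 := (Finset.mem_Icc.mp (hμ a.succ)).2
    have h2 := (Finset.mem_Icc.mp (hμ a.castSucc)).1
    have e : ((a.succ : Fin (M+1)).castSucc : Fin (M+2)) = ((a.castSucc : Fin (M+1)).succ) :=
      Fin.ext (by simp)
    rw [e] at h1
    exact le_trans h1 h2


noncomputable def cc (j : ℕ) (x : ℚ) : ℚ := ∏ t ∈ Finset.range j, (x - t)

lemma cc_zero (x : ℚ) : cc 0 x = 1 := by simp [cc]

lemma cc_pascal (j : ℕ) (x : ℚ) : cc (j+1) (x+1) - cc (j+1) x = (j+1) * cc j x := by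
  have h1 : cc (j+1) (x+1) = (x+1) * cc j x := by
    rw [cc, Finset.prod_range_succ']
    simp [cc]
    ring
  have h2 : cc (j+1) x = cc j x * (x - j) := by
    rw [cc, Finset.prod_range_succ, ← cc]
  rw [h1, h2]; ring

lemma cc_telescope (j : ℕ) (a b : ℤ) (hab : a ≤ b) :
    ((j:ℚ)+1) * ∑ m ∈ Finset.Ioc a b, cc j (m:ℚ) = cc (j+1) ((b:ℚ)+1) - cc (j+1) ((a:ℚ)+1) := by
  obtain ⟨k, rfl⟩ : ∃ k : ℕ, b = a + k := ⟨(b-a).toNat, by omega⟩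
  clear hab
  induction k with
  | zero => simp
  | succ k ih =>
    have hins : Finset.Ioc a (a+(k+1:ℕ)) = insert (a+(k+1:ℕ)) (Finset.Ioc a (a+(k:ℕ))) := by
      ext x; simp only [Finset.mem_Ioc, Finset.mem_insert]; omega
    have hnm : (a+(k+1:ℕ) : ℤ) ∉ Finset.Ioc a (a+(k:ℕ)) := by simp
    rw [hins, Finset.sum_insert hnm, mul_add, ih]
    have := cc_pascal j ((a:ℚ)+k+1)
    push_cast
    push_cast at this
    ring_nf
    ring_nf at this ⊢
    linarith

noncomputable def pfall (j : ℕ) : Polynomial ℚ :=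
  ∏ t ∈ Finset.range j, (Polynomial.X - Polynomial.C (t:ℚ))

lemma pfall_eval (j : ℕ) (x : ℚ) : (pfall j).eval x = cc j x := by
  simp [pfall, cc, Polynomial.eval_prod]

lemma pfall_monic (j : ℕ) : (pfall j).Monic :=
  monic_prod_of_monic _ _ fun t _ => monic_X_sub_C _

lemma pfall_natDegree (j : ℕ) : (pfall j).natDegree = j := by
  rw [pfall, Polynomial.natDegree_prod]
  · have h1 : ∀ t ∈ Finset.range j, ((X : ℚ[X]) - Polynomial.C (t:ℚ)).natDegree = 1 :=
      fun t _ => Polynomial.natDegree_X_sub_C _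
    rw [Finset.sum_congr rfl h1]
    simp
  · intro t _; exact X_sub_C_ne_zero _

lemma det_cc (k : ℕ) (v : Fin k → ℚ) :
    (Matrix.vandermonde v).det = (Matrix.of fun i j : Fin k => cc j (v i)).det := by
  rw [Matrix.det_eval_matrixOfPolynomials_eq_det_vandermonde v (fun j => pfall j)
    (fun j => pfall_natDegree j) (fun j => pfall_monic j)]
  congr 1
  ext i j
  simp [pfall_eval]

lemma key2 (n : ℕ) (l : Fin (n+1) → ℤ) (h : ∀ i : Fin n, l i.succ ≤ l i.castSucc) :
    ∑ m ∈ Fintype.piFinset (fun i : Fin n => Finset.Ioc (l i.succ) (l i.castSucc)),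
      (Matrix.vandermonde (fun i => ((m i : ℤ) : ℚ))).det
    = (-1)^n / (n.factorial : ℚ) * (Matrix.vandermonde (fun i => ((l i : ℤ):ℚ))).det := by
  classical
  set Nm : Matrix (Fin (n+1)) (Fin (n+1)) ℚ :=
    Matrix.of (fun i j => cc (j:ℕ) ((l i : ℚ)+1)) with hNm
  set T : Matrix (Fin (n+1)) (Fin (n+1)) ℚ :=
    Matrix.of (fun i k => if i = k then 1 else if (k:ℕ) = (i:ℕ)+1 then (-1:ℚ) else 0) with hT
  have hdetT : T.det = 1 := by
    rw [Matrix.det_of_upperTriangular (M := T)]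
    · simp [hT]
    · intro i j hij
      simp only [hT, Matrix.of_apply]
      have hji : (j:ℕ) < (i:ℕ) := hij
      have h1 : ¬ (i = j) := by intro hc; rw [hc] at hji; omega
      have h2 : ¬ ((j:ℕ) = (i:ℕ)+1) := by omega
      rw [if_neg h1, if_neg h2]
  have hdetN : Nm.det = (Matrix.vandermonde (fun i => ((l i : ℤ):ℚ))).det := by
    have h1 : (Matrix.vandermonde (fun i : Fin (n+1) => ((l i : ℚ)+1))).det = Nm.det := by
      rw [det_cc]
    rw [← h1, Matrix.det_vandermonde_add]
  set TN := T * Nm with hTN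
  have htn1 : ∀ (i : Fin n) (j : Fin (n+1)), TN i.castSucc j = Nm i.castSucc j - Nm i.succ j := by
    intro i j
    rw [hTN, Matrix.mul_apply]
    have hsplit : ∀ k : Fin (n+1), T i.castSucc k * Nm k j
        = (if k = i.castSucc then Nm k j else 0) + (if k = i.succ then -Nm k j else 0) := by
      intro k
      simp only [hT, Matrix.of_apply]
      rcases eq_or_ne k i.castSucc with rfl | hk1
      · have e3 : ¬(i.castSucc = i.succ) := by
          simp only [Fin.ext_iff, Fin.coe_castSucc, Fin.val_succ]; omega
        rw [if_pos rfl, if_pos rfl, if_neg e3]; ring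
      · rcases eq_or_ne k i.succ with rfl | hk2
        · have e1 : ¬(i.castSucc = i.succ) := by
            simp only [Fin.ext_iff, Fin.coe_castSucc, Fin.val_succ]; omega
          have e2 : (i.succ : ℕ) = (i.castSucc : ℕ)+1 := by simp
          have e4 : ¬(i.succ = i.castSucc) := fun hc => e1 hc.symm
          rw [if_neg e1, if_pos e2, if_neg e4, if_pos rfl]; ring
        · have e1 : ¬(i.castSucc = k) := fun hc => hk1 hc.symm
          have e2 : ¬((k:ℕ) = (i.castSucc:ℕ)+1) := by
            intro hc
            apply hk2
            apply Fin.ext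
            simp only [Fin.val_succ, Fin.coe_castSucc] at hc ⊢
            omega
          rw [if_neg e1, if_neg e2, if_neg hk1, if_neg hk2]; ring
    rw [Finset.sum_congr rfl (fun k _ => hsplit k), Finset.sum_add_distrib,
      Finset.sum_ite_eq' Finset.univ i.castSucc (fun k => Nm k j),
      Finset.sum_ite_eq' Finset.univ i.succ (fun k => -Nm k j)]
    simp only [Finset.mem_univ, if_pos]
    ring
  have htn2 : ∀ (j : Fin (n+1)), TN (Fin.last n) j = Nm (Fin.last n) j := by
    intro j
    rw [hTN, Matrix.mul_apply]
    have hsplit : ∀ k : Fin (n+1), T (Fin.last n) k * Nm k j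
        = (if k = Fin.last n then Nm k j else 0) := by
      intro k
      simp only [hT, Matrix.of_apply]
      rcases eq_or_ne k (Fin.last n) with rfl | hk
      · rw [if_pos rfl, if_pos rfl]; ring
      · have e2 : ¬((k:ℕ) = ((Fin.last n : Fin (n+1)):ℕ)+1) := by
          have := k.isLt
          simp only [Fin.val_last]
          omega
        rw [if_neg (fun hc => hk hc.symm), if_neg e2, if_neg hk]; ring
    rw [Finset.sum_congr rfl (fun k _ => hsplit k),
      Finset.sum_ite_eq' Finset.univ (Fin.last n) (fun k => Nm k j)]
    simp
  have hNcol0 : ∀ k : Fin (n+1), Nm k 0 = 1 := by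
    intro k; simp [hNm, cc]
  have hlap : TN.det = (-1)^n * (TN.submatrix (Fin.last n).succAbove Fin.succ).det := by
    rw [Matrix.det_succ_column_zero]
    rw [Finset.sum_eq_single_of_mem (Fin.last n) (Finset.mem_univ _)]
    · rw [htn2, hNcol0, Fin.val_last]; ring
    · intro i _ hne
      obtain ⟨i', rfl⟩ := Fin.exists_castSucc_eq.mpr hne
      rw [htn1, hNcol0, hNcol0]; ring
  set Bm : Matrix (Fin n) (Fin n) ℚ :=
    Matrix.of (fun i j : Fin n =>
      cc ((j:ℕ)+1) ((l i.castSucc : ℚ)+1) - cc ((j:ℕ)+1) ((l i.succ : ℚ)+1)) with hBm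
  have hsub : TN.submatrix (Fin.last n).succAbove Fin.succ = Bm := by
    ext i j
    rw [Matrix.submatrix_apply, Fin.succAbove_last_apply, htn1]
    simp [hNm, hBm, Fin.val_succ]
  have hdetB : Bm.det = (-1:ℚ)^n * (Matrix.vandermonde (fun i => ((l i : ℤ):ℚ))).det := by
    have h1 : TN.det = Nm.det := by rw [hTN, Matrix.det_mul, hdetT, one_mul]
    have h2 := hlap
    rw [h1, hdetN, hsub] at h2
    rw [h2, ← mul_assoc, ← pow_add]
    rw [Even.neg_one_pow (Even.add_self n), one_mul]
  -- multilinearity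
  have hmlin : ∑ m ∈ Fintype.piFinset (fun i : Fin n => Finset.Ioc (l i.succ) (l i.castSucc)),
      (Matrix.of (fun i j : Fin n => cc (j:ℕ) ((m i : ℚ)))).det
      = (Matrix.of (fun i j : Fin n =>
          ∑ mm ∈ Finset.Ioc (l i.succ) (l i.castSucc), cc (j:ℕ) ((mm:ℚ)))).det := by
    have hms := (Matrix.detRowAlternating (R := ℚ) (n := Fin n)).toMultilinearMap.map_sum_finset
      (g := fun (i : Fin n) (mm : ℤ) => (fun j : Fin n => cc (j:ℕ) (mm:ℚ)))
      (A := fun i => Finset.Ioc (l i.succ) (l i.castSucc))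
    have e1 : (Matrix.detRowAlternating (R := ℚ) (n := Fin n)).toMultilinearMap
        (fun i => ∑ mm ∈ Finset.Ioc (l i.succ) (l i.castSucc),
          (fun j : Fin n => cc (j:ℕ) (mm:ℚ)))
        = (Matrix.of (fun i j : Fin n =>
          ∑ mm ∈ Finset.Ioc (l i.succ) (l i.castSucc), cc (j:ℕ) ((mm:ℚ)))).det := by
      show Matrix.detRowAlternating _ = Matrix.detRowAlternating _
      congr 1
      funext i j
      rw [Finset.sum_apply]
      rfl
    rw [← e1, hms]
    rfl
  -- telescoping identification
  have hAB : (Matrix.of (fun i j : Fin n =>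
      ∑ mm ∈ Finset.Ioc (l i.succ) (l i.castSucc), cc (j:ℕ) ((mm:ℚ))))
      = Matrix.of (fun i j : Fin n => ((((j:ℕ):ℚ))+1)⁻¹ * Bm i j) := by
    ext i j
    have ht := cc_telescope (j:ℕ) (l i.succ) (l i.castSucc) (h i)
    have hj : ((((j:ℕ):ℚ))+1) ≠ 0 := by positivity
    simp only [Matrix.of_apply, hBm]
    rw [eq_inv_mul_iff_mul_eq₀ hj]
    rw [mul_comm] at ht
    rw [mul_comm]
    exact ht
  have hfac : (∏ j : Fin n, ((((j:ℕ):ℚ))+1)⁻¹) = ((n.factorial : ℚ))⁻¹ := by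
    rw [Finset.prod_inv_distrib]
    congr 1
    rw [Fin.prod_univ_eq_prod_range (fun j => (((j:ℚ))+1)) n,
      ← Finset.prod_range_add_one_eq_factorial n]
    push_cast
    rfl
  calc ∑ m ∈ Fintype.piFinset (fun i : Fin n => Finset.Ioc (l i.succ) (l i.castSucc)),
      (Matrix.vandermonde (fun i => ((m i : ℤ) : ℚ))).det
      = ∑ m ∈ Fintype.piFinset (fun i : Fin n => Finset.Ioc (l i.succ) (l i.castSucc)),
        (Matrix.of (fun i j : Fin n => cc (j:ℕ) ((m i : ℚ)))).det := by
        refine Finset.sum_congr rfl (fun m _ => ?_)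
        exact det_cc n (fun i => ((m i : ℤ):ℚ))
    _ = (Matrix.of (fun i j : Fin n =>
          ∑ mm ∈ Finset.Ioc (l i.succ) (l i.castSucc), cc (j:ℕ) ((mm:ℚ)))).det := hmlin
    _ = (Matrix.of (fun i j : Fin n => ((((j:ℕ):ℚ))+1)⁻¹ * Bm i j)).det := by rw [hAB]
    _ = (∏ j : Fin n, ((((j:ℕ):ℚ))+1)⁻¹) * Bm.det := Matrix.det_mul_row _ _
    _ = ((n.factorial:ℚ))⁻¹ * ((-1:ℚ)^n * (Matrix.vandermonde (fun i => ((l i : ℤ):ℚ))).det) := by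
        rw [hfac, hdetB]
    _ = (-1)^n / (n.factorial : ℚ) * (Matrix.vandermonde (fun i => ((l i : ℤ):ℚ))).det := by
        ring

lemma prodpairs (k : ℕ) (f : Fin k → Fin k → ℚ) :
    ∏ p ∈ Finset.univ.filter (fun p : Fin k × Fin k => p.1 < p.2), f p.1 p.2
    = ∏ i : Fin k, ∏ j ∈ Finset.Ioi i, f i j := by
  rw [Finset.prod_sigma']
  refine Finset.prod_nbij' (fun p => ⟨p.1, p.2⟩) (fun q => (q.1, q.2)) ?_ ?_ ?_ ?_ ?_
  · intro p hp
    simp only [Finset.mem_filter, Finset.mem_univ, true_and] at hp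
    simp [Finset.mem_sigma, Finset.mem_Ioi, hp]
  · intro q hq
    simp only [Finset.mem_sigma, Finset.mem_univ, Finset.mem_Ioi, true_and] at hq
    simp [hq]
  · intro p _; rfl
  · intro q _; rfl
  · intro p _; rfl

lemma W_eq (k : ℕ) (v : Fin k → ℤ) :
    (∏ p ∈ Finset.univ.filter (fun p : Fin k × Fin k => p.1 < p.2),
      (((v p.1 : ℚ) - (v p.2 : ℚ) + ((p.2 : ℕ) : ℚ) - ((p.1 : ℕ) : ℚ))
        / (((p.2 : ℕ) : ℚ) - ((p.1 : ℕ) : ℚ))))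
    = (Matrix.vandermonde (fun i => ((v i - (i:ℕ) : ℤ) : ℚ))).det
      / (Matrix.vandermonde (fun i : Fin k => ((-((i:ℕ):ℤ) : ℤ) : ℚ))).det := by
  rw [Matrix.det_vandermonde, Matrix.det_vandermonde, ← prodpairs, ← prodpairs,
    ← Finset.prod_div_distrib]
  refine Finset.prod_congr rfl ?_
  intro p hp
  simp only [Finset.mem_filter, Finset.mem_univ, true_and] at hp
  have hlt : ((p.1:ℕ):ℚ) < ((p.2:ℕ):ℚ) := by
    have : (p.1:ℕ) < (p.2:ℕ) := hp
    exact_mod_cast this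
  have h1 : (((p.2 : ℕ) : ℚ) - ((p.1 : ℕ) : ℚ)) ≠ 0 := by linarith
  have h2 : ((-((p.2:ℕ):ℤ) : ℤ) : ℚ) - ((-((p.1:ℕ):ℤ) : ℤ) : ℚ) ≠ 0 := by
    push_cast; intro hc; apply h1; linarith
  rw [div_eq_div_iff h1 h2]
  push_cast
  ring

lemma Dsingle (N : ℕ) :
    Fintype.piFinset (fun i : Fin N =>
      Finset.Ioc (-(((i.succ : Fin (N+1)):ℕ):ℤ)) (-(((i.castSucc : Fin (N+1)):ℕ):ℤ)))
    = {fun i : Fin N => -((i:ℕ):ℤ)} := by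
  ext m
  simp only [Fintype.mem_piFinset, Finset.mem_Ioc, Finset.mem_singleton, funext_iff]
  constructor
  · intro hm i
    have := hm i
    simp only [Fin.val_succ, Fin.coe_castSucc] at this
    push_cast at this ⊢
    omega
  · intro hm i
    rw [hm i]
    simp only [Fin.val_succ, Fin.coe_castSucc]
    push_cast
    constructor <;> [linarith; linarith]

lemma Drel (N : ℕ) :
    (Matrix.vandermonde (fun i : Fin N => ((-((i:ℕ):ℤ) : ℤ) : ℚ))).det
    = (-1:ℚ)^N / (N.factorial : ℚ)
      * (Matrix.vandermonde (fun i : Fin (N+1) => ((-((i:ℕ):ℤ) : ℤ) : ℚ))).det := by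
  have hk := key2 N (fun i => -((i:ℕ):ℤ)) (by
    intro i
    simp only [Fin.val_succ, Fin.coe_castSucc]
    omega)
  rw [Dsingle, Finset.sum_singleton] at hk
  exact hk

lemma branch (N : ℕ) (lam : Fin (N+1) → ℤ) (hlam : Antitone lam) :
    ∑ μ ∈ Fintype.piFinset (fun i : Fin N => Finset.Icc (lam i.succ) (lam i.castSucc)),
      (∏ p ∈ Finset.univ.filter (fun p : Fin N × Fin N => p.1 < p.2),
        (((μ p.1 : ℚ) - (μ p.2 : ℚ) + ((p.2 : ℕ) : ℚ) - ((p.1 : ℕ) : ℚ))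
          / (((p.2 : ℕ) : ℚ) - ((p.1 : ℕ) : ℚ))))
    = ∏ p ∈ Finset.univ.filter (fun p : Fin (N+1) × Fin (N+1) => p.1 < p.2),
        (((lam p.1 : ℚ) - (lam p.2 : ℚ) + ((p.2 : ℕ) : ℚ) - ((p.1 : ℕ) : ℚ))
          / (((p.2 : ℕ) : ℚ) - ((p.1 : ℕ) : ℚ))) := by
  have hD : (Matrix.vandermonde (fun i : Fin N => ((-((i:ℕ):ℤ) : ℤ) : ℚ))).det ≠ 0 := by
    rw [Matrix.det_vandermonde_ne_zero_iff]
    intro a b hab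
    simp only at hab
    apply Fin.ext
    have h1 : ((a:ℕ):ℚ) = ((b:ℕ):ℚ) := by push_cast at hab; linarith
    exact_mod_cast h1
  set l : Fin (N+1) → ℤ := fun i => lam i - (i:ℕ) with hl
  have hmono : ∀ i : Fin N, l i.succ ≤ l i.castSucc := by
    intro i
    simp only [hl, Fin.val_succ, Fin.coe_castSucc]
    have := hlam (Fin.castSucc_le_succ i)
    push_cast
    omega
  have hkey := key2 N l hmono
  -- change of variables
  have hcv : ∑ μ ∈ Fintype.piFinset (fun i : Fin N => Finset.Icc (lam i.succ) (lam i.castSucc)),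
      (Matrix.vandermonde (fun i => ((μ i - (i:ℕ) : ℤ) : ℚ))).det
      = ∑ m ∈ Fintype.piFinset (fun i : Fin N => Finset.Ioc (l i.succ) (l i.castSucc)),
      (Matrix.vandermonde (fun i => ((m i : ℤ) : ℚ))).det := by
    refine Finset.sum_nbij' (fun μ => fun i => μ i - (i:ℕ)) (fun m => fun i => m i + (i:ℕ))
      ?_ ?_ ?_ ?_ ?_
    · intro μ hμ
      simp only [Fintype.mem_piFinset, Finset.mem_Icc, Finset.mem_Ioc, hl,
        Fin.val_succ, Fin.coe_castSucc] at *
      intro i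
      have := hμ i
      push_cast
      omega
    · intro m hm
      simp only [Fintype.mem_piFinset, Finset.mem_Icc, Finset.mem_Ioc, hl,
        Fin.val_succ, Fin.coe_castSucc] at *
      intro i
      have := hm i
      push_cast at this
      omega
    · intro μ _; funext i; simp
    · intro m _; funext i; simp
    · intro μ _; rfl
  rw [Finset.sum_congr rfl (fun μ _ => W_eq N μ), W_eq (N+1) lam, ← Finset.sum_div,
    hcv, hkey, Drel N]
  have hc : ((-1:ℚ)^N / (N.factorial : ℚ)) ≠ 0 := by
    apply div_ne_zero
    · exact pow_ne_zero _ (by norm_num)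
    · exact_mod_cast Nat.factorial_ne_zero N
  rw [mul_div_mul_left _ _ hc]



/-- the number of integer points of the type-A Gelfand–Tsetlin polytope
`GT_n(λ)` equals the Weyl dimension `∏_{i<j} (λ_i - λ_j + j - i)/(j - i)`. -/
theorem stmt7 (n : ℕ) (lam : Fin n → ℤ) (hlam : Antitone lam) :
    (Nat.card {x : Fin n × Fin n → ℤ //
        IsGTPatternZ n x ∧ ∀ k j : Fin n, (k : ℕ) = n - 1 → x (k, j) = lam j} : ℚ)
      = ∏ p ∈ Finset.univ.filter (fun p : Fin n × Fin n => p.1 < p.2),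
          (((lam p.1 : ℚ) - (lam p.2 : ℚ) + ((p.2 : ℕ) : ℚ) - ((p.1 : ℕ) : ℚ))
            / (((p.2 : ℕ) : ℚ) - ((p.1 : ℕ) : ℚ))) := by
  induction n with
  | zero =>
    rw [card_zero lam]
    simp
  | succ N ih =>
    rw [card_step N lam]
    push_cast
    rw [Finset.sum_congr rfl (fun μ hμ => ih μ (mem_SFin_antitone N lam hlam hμ))]
    exact branch N lam hlam
end

section
/- The branching rule for restriction from U(n) to U(n−1): for an integral dominant weight λ ∈ Z^n (λ_1 ≥ ... ≥ λ_n), the restriction of the irreducible U(n)-representation V_λ to U(n−1) decomposes multiplicity-free as ⊕_β V_β over all β ∈ Z^{n−1} with λ_1 ≥ β_1 ≥ λ_2 ≥ β_2 ≥ ... ≥ β_{n−1} ≥ λ_n. -/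
/-- The alternant `a_μ(x) = det(x_i^{μ_j + n - 1 - j})` (bialternant numerator of the
Schur function `s_μ`, for a possibly non-polynomial integral weight `μ`). -/
noncomputable def aalt (n : ℕ) (mu : Fin n → ℤ) (x : Fin n → ℝ) : ℝ :=
  Matrix.det (Matrix.of fun i j : Fin n => x i ^ (mu j + ((n : ℤ) - 1 - ((j : ℕ) : ℤ))))

/-- Geometric sum over an integer interval. -/
lemma geom_icc {x : ℝ} (hx : x ≠ 0) (a : ℤ) : ∀ b, a ≤ b →
    (x - 1) * ∑ k ∈ Finset.Icc a b, x ^ k = x ^ (b + 1) - x ^ a := by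
  refine Int.le_induction ?_ ?_
  · rw [Finset.Icc_self, Finset.sum_singleton, zpow_add_one₀ hx]
    ring
  · intro b hb ih
    have hins : Finset.Icc a (b + 1) = insert (b + 1) (Finset.Icc a b) := by
      ext k; simp only [Finset.mem_Icc, Finset.mem_insert]; omega
    rw [hins, Finset.sum_insert (by simp), mul_add, ih, zpow_add_one₀ hx (b + 1)]
    ring

/-- Column reduction of the big alternant. -/
lemma stepA (n : ℕ) (lam : Fin (n + 1) → ℤ) (x : Fin n → ℝ) :
    aalt (n + 1) lam (Fin.snoc x 1)
      = Matrix.det (Matrix.of fun i j : Fin n =>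
          x i ^ (lam j.castSucc + ((n : ℤ) - ((j : ℕ) : ℤ)))
            - x i ^ (lam j.succ + ((n : ℤ) - 1 - ((j : ℕ) : ℤ)))) := by
  classical
  set y : Fin (n + 1) → ℝ := Fin.snoc x 1 with hy
  set M : Matrix (Fin (n + 1)) (Fin (n + 1)) ℝ :=
    Matrix.of fun i j => y i ^ (lam j + (((n + 1 : ℕ) : ℤ) - 1 - ((j : ℕ) : ℤ))) with hM
  set T : Matrix (Fin (n + 1)) (Fin (n + 1)) ℝ :=
    Matrix.of fun k j => (if k = j then (1 : ℝ) else 0)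
      - (if (k : ℕ) = (j : ℕ) + 1 then 1 else 0) with hT
  -- T is lower triangular with unit diagonal
  have hTdet : T.det = 1 := by
    have htri : T.BlockTriangular OrderDual.toDual := by
      intro i j hij
      have hlt : i < j := hij
      have h1 : ¬ i = j := fun h => absurd h (by rintro rfl; exact lt_irrefl _ hlt)
      have h2 : ¬ (i : ℕ) = (j : ℕ) + 1 := by
        have := Fin.lt_def.mp hlt; omega
      simp [hT, h1, h2]
    rw [Matrix.det_of_lowerTriangular T htri]
    refine Finset.prod_eq_one fun i _ => ?_
    have : ¬ (i : ℕ) = (i : ℕ) + 1 := by omega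
    simp [hT, this]
  -- columns of M * T
  have hmulc : ∀ (i : Fin (n + 1)) (j : Fin n),
      (M * T) i j.castSucc = M i j.castSucc - M i j.succ := by
    intro i j
    rw [Matrix.mul_apply]
    have hterm : ∀ k : Fin (n + 1), M i k * T k j.castSucc
        = (if k = j.castSucc then M i k else 0) - (if k = j.succ then M i k else 0) := by
      intro k
      have hcond : ((k : ℕ) = ((j.castSucc : Fin (n+1)) : ℕ) + 1) ↔ k = j.succ := by
        rw [Fin.ext_iff, Fin.coe_castSucc, Fin.val_succ]
      simp only [hT, Matrix.of_apply, mul_sub, mul_ite, mul_one, mul_zero, hcond]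
    rw [Finset.sum_congr rfl (fun k _ => hterm k), Finset.sum_sub_distrib,
      Finset.sum_ite_eq' Finset.univ j.castSucc, Finset.sum_ite_eq' Finset.univ j.succ]
    simp
  have hmull : ∀ i : Fin (n + 1), (M * T) i (Fin.last n) = M i (Fin.last n) := by
    intro i
    rw [Matrix.mul_apply]
    have hterm : ∀ k : Fin (n + 1), M i k * T k (Fin.last n)
        = if k = Fin.last n then M i k else 0 := by
      intro k
      have h2 : ¬ ((k : ℕ) = n + 1) := by
        have := k.isLt; omega
      simp [hT, Fin.val_last, mul_sub, mul_ite, h2]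
    rw [Finset.sum_congr rfl (fun k _ => hterm k),
      Finset.sum_ite_eq' Finset.univ (Fin.last n)]
    simp
  -- entries of M
  have hMc : ∀ (i : Fin n) (j : Fin (n + 1)),
      M i.castSucc j = x i ^ (lam j + (((n + 1 : ℕ) : ℤ) - 1 - ((j : ℕ) : ℤ))) := by
    intro i j
    simp [hM, hy, Fin.snoc_castSucc]
  have hMl : ∀ j : Fin (n + 1), M (Fin.last n) j = 1 := by
    intro j
    simp [hM, hy, Fin.snoc_last]
  -- the determinant computation
  have h0 : aalt (n + 1) lam (Fin.snoc x 1) = (M * T).det := by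
    rw [Matrix.det_mul, hTdet, mul_one]; rfl
  rw [h0]
  set D : Matrix (Fin n) (Fin n) ℝ := Matrix.of fun i j : Fin n =>
      x i ^ (lam j.castSucc + ((n : ℤ) - ((j : ℕ) : ℤ)))
        - x i ^ (lam j.succ + ((n : ℤ) - 1 - ((j : ℕ) : ℤ))) with hD
  have hblock : (M * T).submatrix (finSumFinEquiv : Fin n ⊕ Fin 1 ≃ Fin (n + 1))
        (finSumFinEquiv : Fin n ⊕ Fin 1 ≃ Fin (n + 1))
      = Matrix.fromBlocks D (Matrix.of fun i _ => (M * T) i.castSucc (Fin.last n)) 0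
          (Matrix.of fun _ _ => (1 : ℝ)) := by
    have hinl : ∀ i : Fin n, (finSumFinEquiv (Sum.inl i) : Fin (n + 1)) = i.castSucc := by
      intro i; ext; simp
    have hinr : ∀ i : Fin 1, (finSumFinEquiv (Sum.inr i) : Fin (n + 1)) = Fin.last n := by
      intro i; ext; simp [Fin.val_last, Subsingleton.elim i 0]
    ext i j
    cases i with
    | inl i =>
      cases j with
      | inl j =>
        rw [Matrix.submatrix_apply, hinl, hinl, Matrix.fromBlocks_apply₁₁, hmulc, hD]
        simp only [Matrix.of_apply]
        rw [hMc, hMc]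
        congr 2
        · rw [Fin.coe_castSucc]; push_cast; ring
        · rw [Fin.val_succ]; push_cast; ring
      | inr j =>
        rw [Matrix.submatrix_apply, hinl, hinr, Matrix.fromBlocks_apply₁₂]
        rfl
    | inr i =>
      cases j with
      | inl j =>
        rw [Matrix.submatrix_apply, hinr, hinl, Matrix.fromBlocks_apply₂₁, hmulc, hMl, hMl]
        simp
      | inr j =>
        rw [Matrix.submatrix_apply, hinr, hinr, Matrix.fromBlocks_apply₂₂, hmull, hMl]
        rfl
  rw [← Matrix.det_submatrix_equiv_self (finSumFinEquiv : Fin n ⊕ Fin 1 ≃ Fin (n + 1)),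
    hblock, Matrix.det_fromBlocks_zero₂₁, Matrix.det_fin_one]
  simp

/-- The interlacing sum of small alternants. -/
lemma stepB (n : ℕ) (lam : Fin (n + 1) → ℤ) (hlam : Antitone lam)
    (x : Fin n → ℝ) (hx : ∀ i, x i ≠ 0) :
    (∏ i, (x i - 1)) *
        ∑ b ∈ Fintype.piFinset
            (fun i : Fin n => Finset.Icc (lam i.succ) (lam i.castSucc)),
          aalt n b x
      = Matrix.det (Matrix.of fun i j : Fin n =>
          x i ^ (lam j.castSucc + ((n : ℤ) - ((j : ℕ) : ℤ)))
            - x i ^ (lam j.succ + ((n : ℤ) - 1 - ((j : ℕ) : ℤ)))) := by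
  classical
  set c : Fin n → ℤ := fun j => (n : ℤ) - 1 - ((j : ℕ) : ℤ) with hc
  set A : Fin n → Finset ℤ := fun j => Finset.Icc (lam j.succ) (lam j.castSucc) with hA
  -- transpose each determinant
  have h1 : ∀ b : Fin n → ℤ, aalt n b x
      = Matrix.det (Matrix.of fun j i : Fin n => x i ^ (b j + c j)) := by
    intro b
    rw [aalt, ← Matrix.det_transpose]
    congr 1
  -- multilinearity in rows
  have h2 : ∑ b ∈ Fintype.piFinset A,
        Matrix.det (Matrix.of fun j i : Fin n => x i ^ (b j + c j))
      = Matrix.det (Matrix.of fun j i : Fin n => ∑ k ∈ A j, x i ^ (k + c j)) := by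
    have key := ((Matrix.detRowAlternating :
        (Fin n → ℝ) [⋀^Fin n]→ₗ[ℝ] ℝ).toMultilinearMap.map_sum_finset
      (fun j k => fun i : Fin n => x i ^ (k + c j)) A).symm
    convert key using 2
    · rfl
    show Matrix.det _ = Matrix.det _
    congr 1
    ext j i
    simp
  rw [Finset.sum_congr rfl (fun b _ => h1 b), h2, ← Matrix.det_transpose]
  have h3 : (Matrix.of fun j i : Fin n => ∑ k ∈ A j, x i ^ (k + c j)).transpose
      = Matrix.of fun i j : Fin n => ∑ k ∈ A j, x i ^ (k + c j) := by
    ext i j; simp [Matrix.transpose_apply]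
  rw [h3, ← Matrix.det_mul_column]
  congr 1
  ext i j
  have hij : lam j.succ ≤ lam j.castSucc := hlam (Fin.castSucc_lt_succ : j.castSucc < j.succ).le
  have hfac : ∑ k ∈ A j, x i ^ (k + c j) = (∑ k ∈ A j, x i ^ k) * x i ^ c j := by
    rw [Finset.sum_mul]
    exact Finset.sum_congr rfl fun k _ => (zpow_add₀ (hx i) k (c j))
  rw [Matrix.of_apply, Matrix.of_apply, hfac, ← mul_assoc, geom_icc (hx i) _ _ hij,
    sub_mul, ← zpow_add₀ (hx i), ← zpow_add₀ (hx i)]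
  congr 2 <;> (simp [hc]; ring)

/-- the branching rule for the restriction from `U(n+1)` to `U(n)`,
in its equivalent bialternant/character form: since
`a^{(n+1)}_λ(x,1) = Δ_{n+1}(x,1)·s_λ(x,1)` and `Δ_{n+1}(x,1) = Δ_n(x)·∏(x_i-1)`,
the identity `s_λ(x₁,…,x_n,1) = Σ_{β interlacing λ} s_β(x₁,…,x_n)` is equivalent to
`a^{(n+1)}_λ(x,1) = ∏ᵢ(xᵢ-1) · Σ_{β : λ_{i+1} ≤ β_i ≤ λ_i} a^{(n)}_β(x)`,
i.e. `Res^{U(n+1)}_{U(n)} V_λ = ⊕_β V_β`, multiplicity free. -/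
theorem stmt10 (n : ℕ) (lam : Fin (n + 1) → ℤ) (hlam : Antitone lam)
    (x : Fin n → ℝ) (hx : ∀ i, x i ≠ 0) :
    aalt (n + 1) lam (Fin.snoc x 1)
      = (∏ i, (x i - 1)) *
        ∑ b ∈ Fintype.piFinset
            (fun i : Fin n => Finset.Icc (lam i.succ) (lam i.castSucc)),
          aalt n b x :=
  (stepA n lam x).trans (stepB n lam hlam x hx).symm
end

section
/- The sum of Lebesgue volumes of type-A Gelfand–Tsetlin polytopes satisfies the recursion: for λ ∈ R^n with λ_1 > ... > λ_n, ∫_{β ⪰ λ} vol(GT_{n−1}(β)) dβ = vol(GT_n(λ)), i.e., ∫_{{β ∈ R^{n−1}: λ_1 ≥ β_1 ≥ ... ≥ β_{n−1} ≥ λ_n}} ∏_{1≤i<j≤n−1} (β_i − β_j)/(j−i) dβ = ∏_{1≤i<j≤n} (λ_i − λ_j)/(j−i). -/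
open MeasureTheory

open Finset Matrix in
lemma prod_pairs_aux {m : ℕ} (f : Fin m → Fin m → ℝ) :
    ∏ p ∈ Finset.univ.filter (fun p : Fin m × Fin m => p.1 < p.2), f p.1 p.2
      = ∏ i : Fin m, ∏ j ∈ Finset.Ioi i, f i j := by
  rw [Finset.prod_sigma']
  exact Finset.prod_bij' (fun p _ => ⟨p.1, p.2⟩) (fun p _ => (p.1, p.2))
    (by simp) (by simp) (by simp) (by simp) (by simp)

open Finset in
lemma Ioi_castSucc_prod_aux {n : ℕ} (i : Fin n) (g : Fin (n + 1) → ℝ) :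
    ∏ j ∈ Finset.Ioi i.castSucc, g j
      = (∏ j ∈ Finset.Ioi i, g j.castSucc) * g (Fin.last n) := by
  rw [← Finset.filter_lt_eq_Ioi, ← Finset.filter_lt_eq_Ioi, Finset.prod_filter,
    Finset.prod_filter, Fin.prod_univ_castSucc]
  simp [Fin.castSucc_lt_castSucc_iff, Fin.castSucc_lt_last]

open Finset in
lemma pairs_split_aux {n : ℕ} (f : Fin (n + 1) → Fin (n + 1) → ℝ) :
    ∏ i : Fin (n + 1), ∏ j ∈ Finset.Ioi i, f i j
      = (∏ i : Fin n, ∏ j ∈ Finset.Ioi i, f i.castSucc j.castSucc)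
        * ∏ i : Fin n, f i.castSucc (Fin.last n) := by
  rw [Fin.prod_univ_castSucc]
  have h1 : ∏ j ∈ Finset.Ioi (Fin.last n), f (Fin.last n) j = 1 :=
    Finset.prod_eq_one fun j hj => absurd (Finset.mem_Ioi.1 hj) (not_lt.2 j.le_last)
  rw [h1, mul_one]
  rw [← Finset.prod_mul_distrib]
  exact Finset.prod_congr rfl fun i _ => Ioi_castSucc_prod_aux i _

open Finset in
lemma double_prod_mul_aux {m : ℕ} (f g : Fin m → Fin m → ℝ) :
    ∏ i : Fin m, ∏ j ∈ Finset.Ioi i, (f i j * g i j)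
      = (∏ i : Fin m, ∏ j ∈ Finset.Ioi i, f i j)
        * ∏ i : Fin m, ∏ j ∈ Finset.Ioi i, g i j := by
  rw [← Finset.prod_mul_distrib]
  exact Finset.prod_congr rfl fun i _ => Finset.prod_mul_distrib

open Finset Matrix in
lemma integrand_eq_aux {m : ℕ} (v : Fin m → ℝ) :
    ∏ p ∈ Finset.univ.filter (fun p : Fin m × Fin m => p.1 < p.2),
        ((v p.1 - v p.2) / (((p.2 : ℕ) : ℝ) - ((p.1 : ℕ) : ℝ)))
      = (∏ i : Fin m, ∏ j ∈ Finset.Ioi i,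
            ((-1 : ℝ) * ((((j : ℕ) : ℝ) - ((i : ℕ) : ℝ))⁻¹)))
          * (Matrix.vandermonde v).det := by
  rw [prod_pairs_aux (fun i j => (v i - v j) / (((j : ℕ) : ℝ) - ((i : ℕ) : ℝ))),
    Matrix.det_vandermonde, ← double_prod_mul_aux]
  refine Finset.prod_congr rfl fun i _ => Finset.prod_congr rfl fun j _ => ?_
  ring

open Finset in
lemma rev_prod_eq_aux {n : ℕ} :
    ∏ i : Fin n, ((n : ℝ) - ((i : ℕ) : ℝ))⁻¹ = ∏ j : Fin n, (((j : ℕ) : ℝ) + 1)⁻¹ := by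
  rw [← Equiv.prod_comp (Fin.revPerm) (fun j : Fin n => ((n : ℝ) - ((j : ℕ) : ℝ))⁻¹)]
  refine Finset.prod_congr rfl fun j _ => ?_
  congr 1
  have hj : (j : ℕ) + 1 ≤ n := j.is_lt
  have : ((Fin.revPerm j : Fin n) : ℕ) = n - (↑j + 1) := Fin.val_rev j
  rw [this, Nat.cast_sub hj]
  push_cast
  ring

open Finset Matrix in
lemma sum_if_nat_aux {n : ℕ} (m : ℕ) (g : Fin (n + 1) → ℝ) :
    ∑ k : Fin (n + 1), (if (k : ℕ) = m then g k else 0)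
      = if h : m < n + 1 then g ⟨m, h⟩ else 0 := by
  split_ifs with h
  · rw [Finset.sum_eq_single (⟨m, h⟩ : Fin (n + 1))]
    · simp
    · intro k _ hk
      rw [if_neg]
      exact fun hc => hk (Fin.ext hc)
    · simp
  · exact Finset.sum_eq_zero fun k _ => if_neg (by have := k.is_lt; omega)

open Finset Matrix in
lemma det_diff_aux {n : ℕ} (v : Fin (n + 1) → ℝ) :
    Matrix.det (Matrix.of fun (i j : Fin n) =>
        v i.castSucc ^ ((j : ℕ) + 1) - v i.succ ^ ((j : ℕ) + 1))
      = (-1 : ℝ) ^ n * (Matrix.vandermonde v).det := by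
  set E : Matrix (Fin (n + 1)) (Fin (n + 1)) ℝ :=
    Matrix.of fun i k => (if k = i then (1:ℝ) else 0) - (if (k : ℕ) = (i : ℕ) + 1 then 1 else 0)
    with hE
  have hEdet : E.det = 1 := by
    rw [Matrix.det_of_upperTriangular (M := E) ?ht]
    · apply Finset.prod_eq_one
      intro i _
      simp [hE]
    · intro i k hki
      have hki' : (k : ℕ) < (i : ℕ) := hki
      have h1 : ¬ (k = i) := fun h => by subst h; exact lt_irrefl _ hki'
      have h2 : ¬ ((k : ℕ) = (i : ℕ) + 1) := by omega
      simp [hE, h1, h2]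
  have hM : (E * Matrix.vandermonde v).det = (Matrix.vandermonde v).det := by
    rw [Matrix.det_mul, hEdet, one_mul]
  set M := E * Matrix.vandermonde v with hMdef
  have hentry : ∀ i j, M i j = v i ^ (j : ℕ)
      - (if h : (i : ℕ) + 1 < n + 1 then v ⟨(i:ℕ)+1, h⟩ ^ (j : ℕ) else 0) := by
    intro i j
    rw [hMdef, Matrix.mul_apply]
    simp only [hE, Matrix.of_apply, Matrix.vandermonde_apply, sub_mul, ite_mul, one_mul, zero_mul]
    rw [Finset.sum_sub_distrib, Finset.sum_ite_eq' Finset.univ i, if_pos (Finset.mem_univ i),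
      sum_if_nat_aux]
  have hcol0 : ∀ i, M i 0 = if i = Fin.last n then 1 else 0 := by
    intro i
    rw [hentry]
    by_cases h : i = Fin.last n
    · subst h; rw [dif_neg (by simp)]; simp
    · have hlt : (i : ℕ) + 1 < n + 1 := by
        have hi := i.is_lt
        by_contra hc
        exact h (Fin.ext (by simp only [Fin.val_last]; omega))
      rw [dif_pos hlt]
      simp [h]
  have hexp := Matrix.det_succ_column_zero M
  rw [Finset.sum_eq_single (Fin.last n)] at hexp
  · rw [hcol0, if_pos rfl, mul_one] at hexp
    have hsub : (M.submatrix (Fin.last n).succAbove Fin.succ)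
        = Matrix.of fun (i j : Fin n) =>
            v i.castSucc ^ ((j : ℕ) + 1) - v i.succ ^ ((j : ℕ) + 1) := by
      ext i j
      simp only [Matrix.submatrix_apply, Fin.succAbove_last, Matrix.of_apply]
      rw [hentry]
      have hlt : ((i.castSucc : Fin (n+1)) : ℕ) + 1 < n + 1 := by
        have := i.is_lt; simp only [Fin.coe_castSucc]; omega
      rw [dif_pos hlt]
      have h1 : (⟨((i.castSucc : Fin (n+1)) : ℕ) + 1, hlt⟩ : Fin (n+1)) = i.succ :=
        Fin.ext (by simp)
      rw [h1]
      simp [Fin.val_succ]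
    rw [hsub] at hexp
    rw [← hM, hexp, Fin.val_last]
    have hone : (-1:ℝ)^n * (-1)^n = 1 := by rw [← mul_pow]; norm_num
    rw [← mul_assoc, hone, one_mul]
  · intro i _ hi
    rw [hcol0, if_neg hi]
    ring
  · simp

lemma icc_pow_integral_aux {a c : ℝ} (h : a ≤ c) (e : ℕ) :
    ∫ x in Set.Icc a c, x ^ e = (c ^ (e + 1) - a ^ (e + 1)) / ((e : ℝ) + 1) := by
  rw [MeasureTheory.integral_Icc_eq_integral_Ioc, ← intervalIntegral.integral_of_le h,
    integral_pow]

lemma box_prod_integral_aux {n : ℕ} (a c : Fin n → ℝ) (e : Fin n → ℕ) :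
    ∫ b in Set.univ.pi (fun i => Set.Icc (a i) (c i)), ∏ k, b k ^ e k
      = ∏ k, ∫ x in Set.Icc (a k) (c k), x ^ e k := by
  rw [← MeasureTheory.integral_indicator (MeasurableSet.univ_pi fun i => measurableSet_Icc)]
  have hfun : (Set.univ.pi fun i => Set.Icc (a i) (c i)).indicator
        (fun b : Fin n → ℝ => ∏ k, b k ^ e k)
      = fun b => ∏ k, (Set.Icc (a k) (c k)).indicator (fun x => x ^ e k) (b k) := by
    funext b
    by_cases hb : b ∈ Set.univ.pi fun i => Set.Icc (a i) (c i)
    · rw [Set.indicator_of_mem hb]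
      exact Finset.prod_congr rfl fun k _ =>
        (Set.indicator_of_mem (hb k (Set.mem_univ k)) _).symm
    · rw [Set.indicator_of_notMem hb]
      rw [Set.mem_pi] at hb
      push_neg at hb
      obtain ⟨i, -, hi⟩ := hb
      exact (Finset.prod_eq_zero (Finset.mem_univ i)
        (by rw [Set.indicator_of_notMem hi])).symm
  rw [hfun,
    MeasureTheory.integral_fintype_prod_volume_eq_prod (ι := Fin n)
      (f := fun k x => (Set.Icc (a k) (c k)).indicator (fun y => y ^ e k) x)]
  exact Finset.prod_congr rfl fun k _ =>
    MeasureTheory.integral_indicator measurableSet_Icc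

open Finset Matrix in
lemma int_det_vandermonde_aux {n : ℕ} (a c : Fin n → ℝ) (h : ∀ i, a i ≤ c i) :
    ∫ b in Set.univ.pi (fun i => Set.Icc (a i) (c i)), (Matrix.vandermonde b).det
      = Matrix.det (Matrix.of fun k j : Fin n =>
          (c k ^ ((j : ℕ) + 1) - a k ^ ((j : ℕ) + 1)) / (((j : ℕ) : ℝ) + 1)) := by
  have hpt : ∀ b : Fin n → ℝ, (Matrix.vandermonde b).det
      = ∑ σ : Equiv.Perm (Fin n),
          ((Equiv.Perm.sign σ : ℤ) : ℝ) * ∏ k, b k ^ ((σ⁻¹ k : Fin n) : ℕ) := by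
    intro b
    rw [Matrix.det_apply]
    refine Finset.sum_congr rfl fun σ _ => ?_
    rw [Units.smul_def, zsmul_eq_mul]
    congr 1
    rw [← Equiv.prod_comp σ (fun k => b k ^ ((σ⁻¹ k : Fin n) : ℕ))]
    exact Finset.prod_congr rfl fun i _ => by simp [Matrix.vandermonde_apply]
  calc ∫ b in Set.univ.pi (fun i => Set.Icc (a i) (c i)), (Matrix.vandermonde b).det
      = ∫ b in Set.univ.pi (fun i => Set.Icc (a i) (c i)),
          ∑ σ : Equiv.Perm (Fin n),
            ((Equiv.Perm.sign σ : ℤ) : ℝ) * ∏ k, b k ^ ((σ⁻¹ k : Fin n) : ℕ) := by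
        exact integral_congr_ae (Filter.Eventually.of_forall fun b => hpt b)
    _ = ∑ σ : Equiv.Perm (Fin n), ∫ b in Set.univ.pi (fun i => Set.Icc (a i) (c i)),
            ((Equiv.Perm.sign σ : ℤ) : ℝ) * ∏ k, b k ^ ((σ⁻¹ k : Fin n) : ℕ) := by
        refine MeasureTheory.integral_finset_sum _ fun σ _ => ?_
        refine (Integrable.const_mul ?_ _)
        refine ContinuousOn.integrableOn_compact
          (isCompact_univ_pi fun i => isCompact_Icc) ?_
        exact (Continuous.continuousOn (by fun_prop))
    _ = ∑ σ : Equiv.Perm (Fin n),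
          ((Equiv.Perm.sign σ : ℤ) : ℝ) * ∏ k, ∫ x in Set.Icc (a k) (c k),
            x ^ ((σ⁻¹ k : Fin n) : ℕ) := by
        refine Finset.sum_congr rfl fun σ _ => ?_
        rw [MeasureTheory.integral_const_mul, box_prod_integral_aux]
    _ = ∑ σ : Equiv.Perm (Fin n),
          ((Equiv.Perm.sign σ : ℤ) : ℝ) * ∏ k, (Matrix.of fun k j : Fin n =>
            (c k ^ ((j : ℕ) + 1) - a k ^ ((j : ℕ) + 1)) / (((j : ℕ) : ℝ) + 1)) k (σ⁻¹ k) := by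
        refine Finset.sum_congr rfl fun σ _ => ?_
        congr 1
        exact Finset.prod_congr rfl fun k _ => by
          rw [icc_pow_integral_aux (h k)]; rfl
    _ = Matrix.det (Matrix.of fun k j : Fin n =>
          (c k ^ ((j : ℕ) + 1) - a k ^ ((j : ℕ) + 1)) / (((j : ℕ) : ℝ) + 1)) := by
        set D := Matrix.of fun k j : Fin n =>
          (c k ^ ((j : ℕ) + 1) - a k ^ ((j : ℕ) + 1)) / (((j : ℕ) : ℝ) + 1) with hD
        rw [← Matrix.det_transpose D, Matrix.det_apply]
        rw [← Equiv.sum_comp (Equiv.inv (Equiv.Perm (Fin n)))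
          (fun σ => (Equiv.Perm.sign σ) • ∏ i, D.transpose (σ i) i)]
        refine Finset.sum_congr rfl fun σ _ => ?_
        simp only [Equiv.inv_apply, Equiv.Perm.sign_inv, Units.smul_def, zsmul_eq_mul,
          Matrix.transpose_apply]

/-- the recursion for volumes of type-A Gelfand–Tsetlin polytopes:
`∫_{λ ⪰ β} ∏_{i<j} (β_i-β_j)/(j-i) dβ = ∏_{i<j} (λ_i-λ_j)/(j-i)`. -/
theorem stmt11 (n : ℕ) (lam : Fin (n + 1) → ℝ)
    (hlam : ∀ i j : Fin (n + 1), i < j → lam j < lam i) :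
    ∫ b in {b : Fin n → ℝ | ∀ i : Fin n, lam i.succ ≤ b i ∧ b i ≤ lam i.castSucc},
        ∏ p ∈ Finset.univ.filter (fun p : Fin n × Fin n => p.1 < p.2),
          ((b p.1 - b p.2) / (((p.2 : ℕ) : ℝ) - ((p.1 : ℕ) : ℝ)))
      = ∏ p ∈ Finset.univ.filter (fun p : Fin (n + 1) × Fin (n + 1) => p.1 < p.2),
          ((lam p.1 - lam p.2) / (((p.2 : ℕ) : ℝ) - ((p.1 : ℕ) : ℝ))) := by
  classical
  have hle : ∀ i : Fin n, lam i.succ ≤ lam i.castSucc :=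
    fun i => (hlam _ _ (Fin.castSucc_lt_succ (i := i))).le
  have hS : {b : Fin n → ℝ | ∀ i : Fin n, lam i.succ ≤ b i ∧ b i ≤ lam i.castSucc}
      = Set.univ.pi (fun i => Set.Icc (lam i.succ) (lam i.castSucc)) := by
    ext b
    simp only [Set.mem_setOf_eq, Set.mem_pi, Set.mem_univ, Set.mem_Icc, forall_const]
  set Cn : ℝ := ∏ i : Fin n, ∏ j ∈ Finset.Ioi i,
      ((-1 : ℝ) * ((((j : ℕ) : ℝ) - ((i : ℕ) : ℝ))⁻¹)) with hCn
  have h1 : ∫ b in {b : Fin n → ℝ | ∀ i : Fin n, lam i.succ ≤ b i ∧ b i ≤ lam i.castSucc},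
        ∏ p ∈ Finset.univ.filter (fun p : Fin n × Fin n => p.1 < p.2),
          ((b p.1 - b p.2) / (((p.2 : ℕ) : ℝ) - ((p.1 : ℕ) : ℝ)))
      = Cn * ∫ b in Set.univ.pi (fun i => Set.Icc (lam i.succ) (lam i.castSucc)),
          (Matrix.vandermonde b).det := by
    rw [hS, ← MeasureTheory.integral_const_mul]
    exact integral_congr_ae (Filter.Eventually.of_forall fun b => integrand_eq_aux b)
  rw [h1, int_det_vandermonde_aux _ _ hle, integrand_eq_aux lam]
  -- scale columns
  have hDA : (Matrix.of fun k j : Fin n =>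
        (lam k.castSucc ^ ((j : ℕ) + 1) - lam k.succ ^ ((j : ℕ) + 1)) / (((j : ℕ) : ℝ) + 1))
      = Matrix.of fun k j : Fin n => ((((j : ℕ) : ℝ) + 1)⁻¹) *
          (Matrix.of fun (i j : Fin n) =>
            lam i.castSucc ^ ((j : ℕ) + 1) - lam i.succ ^ ((j : ℕ) + 1)) k j := by
    ext k j
    simp only [Matrix.of_apply]
    rw [div_eq_mul_inv, mul_comm]
  rw [hDA, Matrix.det_mul_row, det_diff_aux]
  -- now pure constants
  have hsplit : (∏ i : Fin (n + 1), ∏ j ∈ Finset.Ioi i,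
        ((-1 : ℝ) * ((((j : ℕ) : ℝ) - ((i : ℕ) : ℝ))⁻¹)))
      = Cn * ((-1 : ℝ) ^ n * ∏ j : Fin n, (((j : ℕ) : ℝ) + 1)⁻¹) := by
    rw [pairs_split_aux (fun i j => (-1 : ℝ) * ((((j : ℕ) : ℝ) - ((i : ℕ) : ℝ))⁻¹))]
    have hA : (∏ i : Fin n, ∏ j ∈ Finset.Ioi i,
          ((-1 : ℝ) * ((((j.castSucc : Fin (n+1)) : ℕ) : ℝ)
            - (((i.castSucc : Fin (n+1)) : ℕ) : ℝ))⁻¹))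
        = Cn := by
      rw [hCn]
      refine Finset.prod_congr rfl fun i _ => Finset.prod_congr rfl fun j _ => ?_
      simp [Fin.coe_castSucc]
    have hB : (∏ i : Fin n, ((-1 : ℝ) * ((((Fin.last n : Fin (n+1)) : ℕ) : ℝ)
            - (((i.castSucc : Fin (n+1)) : ℕ) : ℝ))⁻¹))
        = (-1 : ℝ) ^ n * ∏ j : Fin n, (((j : ℕ) : ℝ) + 1)⁻¹ := by
      simp only [Fin.val_last, Fin.coe_castSucc]
      rw [Finset.prod_mul_distrib, Finset.prod_const, Finset.card_univ, Fintype.card_fin,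
        rev_prod_eq_aux]
    rw [hA, hB]
  rw [hsplit]
  ring
end

section
/- Let w be a nonnegative integrable weight on R with all moments finite, and suppose (p_i)_{i≥0} are polynomials with deg p_i = i and ∫ p_i p_j w = δ_{ij}. If a probability measure on R^n has density proportional to Δ_n(λ)^2 ∏_{i=1}^n w(λ_i) (Δ_n the Vandermonde), then the induced point process is determinantal with correlation kernel K(x,y) = ∑_{i=0}^{n−1} p_i(x) p_i(y) √(w(x) w(y)), i.e., for disjoint Borel sets B_1,...,B_k, E[∏_j #{i: λ_i ∈ B_j}] = ∫_{B_1×...×B_k} det(K(x_a, x_b))_{k×k} dx_1...dx_k. -/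
open MeasureTheory Polynomial Finset Equiv

noncomputable section

/-- sign of a permutation as a real number -/
def sgn {m : ℕ} (σ : Equiv.Perm (Fin m)) : ℝ := ((Equiv.Perm.sign σ : ℤ) : ℝ)

lemma sgn_mul_left {m : ℕ} (σ u : Equiv.Perm (Fin m)) :
    sgn σ * sgn (σ * u) = sgn u := by
  unfold sgn
  rw [← Int.cast_mul, ← Units.val_mul, Equiv.Perm.sign_mul, ← mul_assoc,
    Int.units_mul_self, one_mul]

lemma pairprod_sq {n : ℕ} (l : Fin n → ℝ) :
    (∏ q ∈ Finset.univ.filter (fun q : Fin n × Fin n => q.1 < q.2), (l q.1 - l q.2)) ^ 2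
      = (Matrix.vandermonde l).det ^ 2 := by
  have h1 : (∏ q ∈ Finset.univ.filter (fun q : Fin n × Fin n => q.1 < q.2), (l q.1 - l q.2))
      = ∏ i : Fin n, ∏ j ∈ Finset.Ioi i, (l i - l j) := by
    rw [← Finset.prod_sigma (Finset.univ) (fun i => Finset.Ioi i)
      (fun x => (l x.1 - l x.2))]
    refine Finset.prod_nbij' (fun q => ⟨q.1, q.2⟩) (fun x => (x.1, x.2)) ?_ ?_ ?_ ?_ ?_
    · intro a ha; simp only [Finset.mem_filter] at ha
      simp [Finset.mem_sigma, Finset.mem_Ioi, ha.2]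
    · intro a ha; simp only [Finset.mem_sigma, Finset.mem_Ioi] at ha
      simp [ha.2]
    · intro a _; rfl
    · intro a _; rfl
    · intro a _; rfl
  rw [h1, Matrix.det_vandermonde]
  have h2 : ∀ i : Fin n, ∏ j ∈ Finset.Ioi i, (l i - l j)
      = (-1 : ℝ) ^ (Finset.Ioi i).card * ∏ j ∈ Finset.Ioi i, (l j - l i) := by
    intro i
    rw [← Finset.prod_const, ← Finset.prod_mul_distrib]
    exact Finset.prod_congr rfl (fun j _ => by ring)
  simp_rw [h2]
  rw [Finset.prod_mul_distrib, Finset.prod_pow_eq_pow_sum]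
  rw [mul_pow, ← pow_mul, mul_comm _ 2, pow_mul, neg_one_sq, one_pow, one_mul]

end
noncomputable section

lemma vdm_det_eq {n : ℕ} (p : ℕ → Polynomial ℝ) (hdeg : ∀ i : ℕ, (p i).degree = (i : ℕ))
    (l : Fin n → ℝ) :
    (Matrix.vandermonde l).det
      = (∏ j : Fin n, ((p (j : ℕ)).leadingCoeff)⁻¹)
        * (Matrix.of fun i j : Fin n => (p (j : ℕ)).eval (l i)).det := by
  have hp0 : ∀ i : ℕ, p i ≠ 0 := by
    intro i h
    have := hdeg i
    rw [h, Polynomial.degree_zero] at this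
    simp at this
  have hγ : ∀ i : ℕ, (p i).leadingCoeff ≠ 0 := fun i =>
    Polynomial.leadingCoeff_ne_zero.mpr (hp0 i)
  set q : Fin n → Polynomial ℝ :=
    fun j => Polynomial.C ((p (j : ℕ)).leadingCoeff)⁻¹ * p (j : ℕ) with hq
  have hnd : ∀ i : ℕ, (p i).natDegree = i := fun i =>
    Polynomial.natDegree_eq_of_degree_eq_some (hdeg i)
  have h_deg : ∀ j : Fin n, (q j).natDegree = (j : ℕ) := by
    intro j
    rw [hq]
    rw [Polynomial.natDegree_C_mul (inv_ne_zero (hγ j))]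
    exact hnd j
  have h_monic : ∀ j : Fin n, Polynomial.Monic (q j) := by
    intro j
    unfold Polynomial.Monic
    rw [hq, Polynomial.leadingCoeff_mul, Polynomial.leadingCoeff_C]
    exact inv_mul_cancel₀ (hγ j)
  rw [Matrix.det_eval_matrixOfPolynomials_eq_det_vandermonde l q h_deg h_monic]
  have : (Matrix.of fun i j : Fin n => (q j).eval (l i))
      = Matrix.of fun i j : Fin n =>
          (fun b : Fin n => ((p (b : ℕ)).leadingCoeff)⁻¹) j
            * (Matrix.of fun i j : Fin n => (p (j : ℕ)).eval (l i)) i j := by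
    ext i j
    simp [hq]
  rw [this, Matrix.det_mul_row]

lemma det_eval_expand {n : ℕ} (p : ℕ → Polynomial ℝ) (l : Fin n → ℝ) :
    (Matrix.of fun i j : Fin n => (p (j : ℕ)).eval (l i)).det
      = ∑ σ : Equiv.Perm (Fin n), sgn σ * ∏ a : Fin n, (p ((σ a : Fin n) : ℕ)).eval (l a) := by
  rw [← Matrix.det_transpose, Matrix.det_apply']
  rfl

lemma density_expand {n : ℕ} (p : ℕ → Polynomial ℝ) (hdeg : ∀ i : ℕ, (p i).degree = (i : ℕ))
    (w : ℝ → ℝ) (l : Fin n → ℝ) :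
    (∏ q ∈ Finset.univ.filter (fun q : Fin n × Fin n => q.1 < q.2), (l q.1 - l q.2)) ^ 2
        * ∏ i, w (l i)
      = (∏ j : Fin n, ((p (j : ℕ)).leadingCoeff)⁻¹) ^ 2
        * ∑ σ : Equiv.Perm (Fin n), ∑ τ : Equiv.Perm (Fin n), (sgn σ * sgn τ)
            * ∏ a : Fin n,
              ((p ((σ a : Fin n) : ℕ)).eval (l a) * (p ((τ a : Fin n) : ℕ)).eval (l a)
                * w (l a)) := by
  rw [pairprod_sq, vdm_det_eq p hdeg, mul_pow, det_eval_expand, mul_assoc]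
  congr 1
  rw [sq, Finset.sum_mul_sum, Finset.sum_mul]
  refine Finset.sum_congr rfl (fun σ _ => ?_)
  rw [Finset.sum_mul]
  refine Finset.sum_congr rfl (fun τ _ => ?_)
  have hp : ∏ a : Fin n,
      ((p ((σ a : Fin n) : ℕ)).eval (l a) * (p ((τ a : Fin n) : ℕ)).eval (l a) * w (l a))
      = (∏ a : Fin n, (p ((σ a : Fin n) : ℕ)).eval (l a))
        * (∏ a : Fin n, (p ((τ a : Fin n) : ℕ)).eval (l a)) * (∏ a : Fin n, w (l a)) := by
    rw [Finset.prod_mul_distrib, Finset.prod_mul_distrib]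
  rw [hp]
  ring
end
section meas

lemma polyw_int {w : ℝ → ℝ} (hmom : ∀ j : ℕ, MeasureTheory.Integrable (fun x => x ^ j * w x))
    (q : Polynomial ℝ) : MeasureTheory.Integrable (fun x => q.eval x * w x) := by
  have : (fun x => q.eval x * w x)
      = fun x => ∑ m ∈ Finset.range (q.natDegree + 1), q.coeff m * (x ^ m * w x) := by
    funext x
    rw [Polynomial.eval_eq_sum_range, Finset.sum_mul]
    exact Finset.sum_congr rfl (fun m _ => mul_assoc _ _ _)
  rw [this]
  exact MeasureTheory.integrable_finset_sum _ (fun m _ => (hmom m).const_mul _)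

lemma psi_int {w : ℝ → ℝ} (hmom : ∀ j : ℕ, MeasureTheory.Integrable (fun x => x ^ j * w x))
    (p : ℕ → Polynomial ℝ) (i i' : ℕ) :
    MeasureTheory.Integrable (fun x => (p i).eval x * (p i').eval x * w x) := by
  have := polyw_int hmom (p i * p i')
  simpa [Polynomial.eval_mul] using this

lemma ind_one_mul (s : Set ℝ) (f : ℝ → ℝ) (x : ℝ) :
    s.indicator (fun _ => (1 : ℝ)) x * f x = s.indicator f x := by
  by_cases h : x ∈ s <;> simp [h]

lemma prod_ind_integrable {n : ℕ} (T : Fin n → Set ℝ) (hT : ∀ a, MeasurableSet (T a))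
    (F : Fin n → ℝ → ℝ) (hF : ∀ a, MeasureTheory.Integrable (F a)) :
    MeasureTheory.Integrable (fun l : Fin n → ℝ => ∏ a, (T a).indicator (F a) (l a)) :=
  MeasureTheory.Integrable.fintype_prod (𝕜 := ℝ) fun a => (hF a).indicator (hT a)

lemma prod_ind_integral {n : ℕ} (T : Fin n → Set ℝ) (hT : ∀ a, MeasurableSet (T a))
    (F : Fin n → ℝ → ℝ) :
    ∫ l : Fin n → ℝ, ∏ a, (T a).indicator (F a) (l a)
      = ∏ a, ∫ x in T a, F a x := by
  rw [MeasureTheory.integral_fintype_prod_volume_eq_prod (𝕜 := ℝ)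
    (f := fun a => (T a).indicator (F a))]
  exact Finset.prod_congr rfl fun a _ =>
    MeasureTheory.integral_indicator (hT a)

end meas
section comb

open Function

variable {n k : ℕ}

lemma exists_perm_extend (hkn : k ≤ n) (g : Fin k → Fin n) (hg : Injective g) :
    ∃ σ : Equiv.Perm (Fin n), ∀ j, σ (Fin.castLE hkn j) = g j := by
  classical
  set cLE : Fin k → Fin n := Fin.castLE hkn with hcLE
  have hinj : Injective cLE := Fin.castLE_injective hkn
  set s : Set (Fin n) := Set.range cLE
  set t : Set (Fin n) := Set.range g
  set e₀ : ↥s ≃ ↥t := (Equiv.ofInjective cLE hinj).symm.trans (Equiv.ofInjective g hg)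
  have key : ∀ (j : Fin k) (mem : cLE j ∈ s), ((e₀ ⟨cLE j, mem⟩ : ↥t) : Fin n) = g j := by
    intro j mem
    have hj : (Equiv.ofInjective cLE hinj).symm ⟨cLE j, mem⟩ = j := by
      apply hinj
      rw [Equiv.apply_ofInjective_symm hinj]
    simp only [e₀, Equiv.trans_apply, hj]
    rfl
  have hcards : Fintype.card ↥s = Fintype.card ↥t := by
    rw [Fintype.card_congr (Equiv.ofInjective cLE hinj).symm,
      Fintype.card_congr (Equiv.ofInjective g hg).symm]
  have hcompl : Fintype.card ↥sᶜ = Fintype.card ↥tᶜ := by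
    rw [Fintype.card_compl_set, Fintype.card_compl_set, hcards]
  obtain ⟨σ, hσ⟩ := (Equiv.Set.compl e₀).symm (Fintype.equivOfCardEq hcompl)
  refine ⟨σ, fun j => ?_⟩
  have := hσ ⟨cLE j, ⟨j, rfl⟩⟩
  rw [key j ⟨j, rfl⟩] at this
  exact this

lemma fiber_card (hkn : k ≤ n) (g : Fin k → Fin n) (hg : Injective g) :
    (Finset.univ.filter
        (fun σ : Equiv.Perm (Fin n) => (fun j => σ (Fin.castLE hkn j)) = g)).card
      = Nat.factorial (n - k) := by
  classical
  set cLE : Fin k → Fin n := Fin.castLE hkn with hcLE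
  have hinj : Injective cLE := Fin.castLE_injective hkn
  set s : Set (Fin n) := Set.range cLE
  set t : Set (Fin n) := Set.range g
  set e₀ : ↥s ≃ ↥t := (Equiv.ofInjective cLE hinj).symm.trans (Equiv.ofInjective g hg)
  have key : ∀ (j : Fin k) (mem : cLE j ∈ s), ((e₀ ⟨cLE j, mem⟩ : ↥t) : Fin n) = g j := by
    intro j mem
    have hj : (Equiv.ofInjective cLE hinj).symm ⟨cLE j, mem⟩ = j := by
      apply hinj
      rw [Equiv.apply_ofInjective_symm hinj]
    simp only [e₀, Equiv.trans_apply, hj]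
    rfl
  have hcards : Fintype.card ↥s = Fintype.card ↥t := by
    rw [Fintype.card_congr (Equiv.ofInjective cLE hinj).symm,
      Fintype.card_congr (Equiv.ofInjective g hg).symm]
  have hcompl : Fintype.card ↥sᶜ = Fintype.card ↥tᶜ := by
    rw [Fintype.card_compl_set, Fintype.card_compl_set, hcards]
  have hscard : Fintype.card ↥sᶜ = n - k := by
    rw [Fintype.card_compl_set, Fintype.card_congr (Equiv.ofInjective cLE hinj).symm]
    simp
  rw [← Fintype.card_subtype]
  have h1 : Fintype.card {σ : Equiv.Perm (Fin n) // (fun j => σ (cLE j)) = g}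
      = Fintype.card {σ : Fin n ≃ Fin n // ∀ x : ↥s, σ x = (e₀ x : Fin n)} := by
    refine Fintype.card_congr (Equiv.subtypeEquiv (Equiv.refl _) (fun σ => ?_))
    constructor
    · rintro h ⟨x, j, rfl⟩
      simp only [Equiv.refl_apply]
      have h2 : σ (cLE j) = g j := congrFun h j
      rw [key j ⟨j, rfl⟩]
      exact h2
    · intro h
      funext j
      have := h ⟨cLE j, ⟨j, rfl⟩⟩
      rw [key j ⟨j, rfl⟩] at this
      exact this
  rw [h1, Fintype.card_congr (Equiv.Set.compl e₀),
    Fintype.card_equiv (Fintype.equivOfCardEq hcompl), hscard]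

lemma sum_perm_comp (hkn : k ≤ n) (G : (Fin k → Fin n) → ℝ) :
    ∑ σ : Equiv.Perm (Fin n), G (fun j => σ (Fin.castLE hkn j))
      = (Nat.factorial (n - k) : ℝ)
        * ∑ g ∈ Finset.univ.filter (Function.Injective :
            (Fin k → Fin n) → Prop), G g := by
  classical
  rw [Finset.sum_comp G (fun σ : Equiv.Perm (Fin n) => fun j => σ (Fin.castLE hkn j))]
  have himg : (Finset.univ.image
      (fun σ : Equiv.Perm (Fin n) => fun j => σ (Fin.castLE hkn j)))
      = Finset.univ.filter (Function.Injective : (Fin k → Fin n) → Prop) := by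
    ext g
    simp only [Finset.mem_image, Finset.mem_filter, Finset.mem_univ, true_and]
    constructor
    · rintro ⟨σ, rfl⟩
      exact σ.injective.comp (Fin.castLE_injective hkn)
    · intro hg
      obtain ⟨σ, hσ⟩ := exists_perm_extend hkn g hg
      exact ⟨σ, funext hσ⟩
  rw [himg, Finset.mul_sum]
  refine Finset.sum_congr rfl (fun g hg => ?_)
  rw [Finset.mem_filter] at hg
  rw [fiber_card hkn g hg.2, nsmul_eq_mul]

end comb
section tail

variable {n k : ℕ}

def lowEquiv (hkn : k ≤ n) : Fin k ≃ {a : Fin n // (a : ℕ) < k} where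
  toFun j := ⟨Fin.castLE hkn j, by simpa using j.isLt⟩
  invFun a := ⟨(a : Fin n).1, a.2⟩
  left_inv j := rfl
  right_inv a := rfl

lemma extendDomain_castLE (hkn : k ≤ n) (π : Equiv.Perm (Fin k)) (j : Fin k) :
    (π.extendDomain (lowEquiv hkn)) (Fin.castLE hkn j) = Fin.castLE hkn (π j) := by
  have h : ((Fin.castLE hkn j : Fin n) : ℕ) < k := by simpa using j.isLt
  rw [Equiv.Perm.extendDomain_apply_subtype _ (lowEquiv hkn) h]
  have hsymm : (lowEquiv hkn).symm ⟨Fin.castLE hkn j, h⟩ = j := rfl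
  rw [hsymm]
  rfl

lemma extendDomain_not_low (hkn : k ≤ n) (π : Equiv.Perm (Fin k)) (a : Fin n)
    (ha : ¬ ((a : ℕ) < k)) : (π.extendDomain (lowEquiv hkn)) a = a :=
  Equiv.Perm.extendDomain_apply_not_subtype _ (lowEquiv hkn) ha

lemma low_iff {u : Equiv.Perm (Fin n)} (hu : ∀ a : Fin n, ¬ ((a : ℕ) < k) → u a = a) :
    ∀ x : Fin n, ((x : ℕ) < k ↔ ((u x : Fin n) : ℕ) < k) := by
  intro x
  constructor
  · intro hx
    by_contra h'
    have h2 := hu (u x) h'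
    have := u.injective h2
    rw [this] at h'
    exact h' hx
  · intro hx
    by_contra h'
    rw [hu x h'] at hx
    exact h' hx

lemma sum_tail_fixing (hkn : k ≤ n) (F : Equiv.Perm (Fin n) → ℝ) :
    ∑ π : Equiv.Perm (Fin k), F (π.extendDomain (lowEquiv hkn))
      = ∑ u ∈ Finset.univ.filter
          (fun u : Equiv.Perm (Fin n) => ∀ a : Fin n, ¬ ((a : ℕ) < k) → u a = a), F u := by
  classical
  refine Finset.sum_bij'
    (i := fun (π : Equiv.Perm (Fin k)) (_ : π ∈ Finset.univ) => π.extendDomain (lowEquiv hkn))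
    (j := fun u (hu : u ∈ Finset.univ.filter _) =>
      ((lowEquiv hkn).permCongr).symm (u.subtypePerm
        (fun x => (low_iff ((Finset.mem_filter.mp hu).2) x).symm)))
    ?_ (fun _ _ => Finset.mem_univ _) ?_ ?_ ?_
  · intro π _
    rw [Finset.mem_filter]
    exact ⟨Finset.mem_univ _, fun a ha => extendDomain_not_low hkn π a ha⟩
  · intro π _
    ext j
    simp only [Equiv.permCongr_symm, Equiv.permCongr_apply, Equiv.symm_symm,
      Equiv.Perm.subtypePerm_apply]
    show ((π.extendDomain (lowEquiv hkn)) ((lowEquiv hkn) j : Fin n)).val = ((π j) : ℕ)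
    rw [show ((lowEquiv hkn) j : Fin n) = Fin.castLE hkn j from rfl,
      extendDomain_castLE hkn π j]
    rfl
  · intro u hu
    have hP := (Finset.mem_filter.mp hu).2
    ext a
    by_cases h : (a : ℕ) < k
    · rw [Equiv.Perm.extendDomain_apply_subtype _ (lowEquiv hkn) h]
      simp [Equiv.permCongr_apply, Equiv.Perm.subtypePerm_apply, lowEquiv]
    · rw [extendDomain_not_low hkn _ a h, hP a h]
  · intro π _
    rfl

end tail
section core

variable {n k : ℕ}

lemma sgn_extend (hkn : k ≤ n) (π : Equiv.Perm (Fin k)) :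
    sgn (π.extendDomain (lowEquiv hkn)) = sgn π := by
  unfold sgn
  rw [Equiv.Perm.sign_extendDomain]

lemma step34 (hkn : k ≤ n) (w : ℝ → ℝ) (p : ℕ → Polynomial ℝ)
    (horth : ∀ i j, ∫ x, (p i).eval x * (p j).eval x * w x = if i = j then (1 : ℝ) else 0)
    (B : Fin k → Set ℝ) (σ : Equiv.Perm (Fin n)) :
    ∑ τ : Equiv.Perm (Fin n), (sgn σ * sgn τ)
        * ∏ a : Fin n, ∫ x in (if h : (a : ℕ) < k then B ⟨a, h⟩ else Set.univ),
            (p ((σ a : Fin n) : ℕ)).eval x * (p ((τ a : Fin n) : ℕ)).eval x * w x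
      = ∑ π : Equiv.Perm (Fin k), sgn π
          * ∏ j : Fin k, ∫ x in B j,
              (p ((σ (Fin.castLE hkn j) : Fin n) : ℕ)).eval x
                * (p ((σ (Fin.castLE hkn (π j)) : Fin n) : ℕ)).eval x * w x := by
  classical
  -- substitute τ = σ * u
  rw [← Fintype.sum_equiv (Equiv.mulLeft σ)
    (fun u => (sgn σ * sgn (σ * u))
        * ∏ a : Fin n, ∫ x in (if h : (a : ℕ) < k then B ⟨a, h⟩ else Set.univ),
            (p ((σ a : Fin n) : ℕ)).eval x * (p (((σ * u) a : Fin n) : ℕ)).eval x * w x)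
    _ (fun u => rfl)]
  -- simplify signs and split the product
  have hsplit : ∀ u : Equiv.Perm (Fin n),
      (sgn σ * sgn (σ * u))
        * ∏ a : Fin n, ∫ x in (if h : (a : ℕ) < k then B ⟨a, h⟩ else Set.univ),
            (p ((σ a : Fin n) : ℕ)).eval x * (p (((σ * u) a : Fin n) : ℕ)).eval x * w x
      = if (∀ a : Fin n, ¬ ((a : ℕ) < k) → u a = a)
          then (sgn u * ∏ a ∈ Finset.univ.filter (fun a : Fin n => (a : ℕ) < k),
            ∫ x in (if h : (a : ℕ) < k then B ⟨a, h⟩ else Set.univ),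
              (p ((σ a : Fin n) : ℕ)).eval x * (p ((σ (u a) : Fin n) : ℕ)).eval x * w x)
          else 0 := by
    intro u
    simp only [Equiv.Perm.mul_apply]
    rw [sgn_mul_left σ u,
      ← Finset.prod_filter_mul_prod_filter_not Finset.univ (fun a : Fin n => (a : ℕ) < k)]
    have h1 : ∀ a ∈ Finset.univ.filter (fun a : Fin n => ¬ ((a : ℕ) < k)),
        (∫ x in (if h : (a : ℕ) < k then B ⟨a, h⟩ else Set.univ),
          (p ((σ a : Fin n) : ℕ)).eval x * (p ((σ (u a) : Fin n) : ℕ)).eval x * w x)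
        = if u a = a then (1 : ℝ) else 0 := by
      intro a ha
      have hak : ¬ ((a : ℕ) < k) := (Finset.mem_filter.mp ha).2
      rw [dif_neg hak, MeasureTheory.Measure.restrict_univ, horth]
      congr 1
      simp only [eq_iff_iff]
      constructor
      · intro h
        exact (σ.injective (Fin.val_injective h)).symm
      · intro h
        rw [h]
    rw [Finset.prod_congr rfl h1, Finset.prod_boole]
    have hcond : (∀ a ∈ Finset.univ.filter (fun a : Fin n => ¬ ((a : ℕ) < k)), u a = a)
        ↔ (∀ a : Fin n, ¬ ((a : ℕ) < k) → u a = a) := by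
      constructor
      · intro h a ha
        exact h a (Finset.mem_filter.mpr ⟨Finset.mem_univ _, ha⟩)
      · intro h a ha
        exact h a (Finset.mem_filter.mp ha).2
    by_cases hc : ∀ a : Fin n, ¬ ((a : ℕ) < k) → u a = a
    · rw [if_pos hc, if_pos (hcond.mpr hc)]
      ring
    · rw [if_neg hc, if_neg (fun h => hc (hcond.mp h))]
      ring
  rw [Finset.sum_congr rfl (fun u _ => hsplit u), ← Finset.sum_filter,
    ← sum_tail_fixing hkn]
  refine Finset.sum_congr rfl (fun π _ => ?_)
  rw [sgn_extend hkn π]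
  congr 1
  -- reindex the low product over `Fin k`
  refine Finset.prod_bij'
    (i := fun (a : Fin n) (ha : a ∈ Finset.univ.filter (fun a : Fin n => (a : ℕ) < k)) =>
      (⟨(a : ℕ), (Finset.mem_filter.mp ha).2⟩ : Fin k))
    (j := fun j _ => Fin.castLE hkn j)
    (fun _ _ => Finset.mem_univ _) ?_ ?_ ?_ ?_
  · intro j _
    refine Finset.mem_filter.mpr ⟨Finset.mem_univ _, ?_⟩
    simpa using j.isLt
  · intro a ha
    exact Fin.ext rfl
  · intro j _
    exact Fin.ext rfl
  · intro a ha
    have h : (a : ℕ) < k := (Finset.mem_filter.mp ha).2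
    have hc : Fin.castLE hkn (⟨(a : ℕ), h⟩ : Fin k) = a := Fin.ext rfl
    have hE : (π.extendDomain (lowEquiv hkn)) a
        = Fin.castLE hkn (π (⟨(a : ℕ), h⟩ : Fin k)) := by
      conv_lhs => rw [← hc]
      exact extendDomain_castLE hkn π _
    rw [dif_pos h, hc, hE]
lemma core (hkn : k ≤ n) (w : ℝ → ℝ) (hwm : Measurable w)
    (hmom : ∀ j : ℕ, MeasureTheory.Integrable (fun x => x ^ j * w x))
    (p : ℕ → Polynomial ℝ)
    (horth : ∀ i j, ∫ x, (p i).eval x * (p j).eval x * w x = if i = j then (1 : ℝ) else 0)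
    (B : Fin k → Set ℝ) (hB : ∀ j, MeasurableSet (B j)) :
    ∫ l : Fin n → ℝ,
      (∑ σ : Equiv.Perm (Fin n), ∑ τ : Equiv.Perm (Fin n), (sgn σ * sgn τ)
        * ∏ a : Fin n, ((p ((σ a : Fin n) : ℕ)).eval (l a)
            * (p ((τ a : Fin n) : ℕ)).eval (l a) * w (l a)))
        * ∏ a : Fin n, (if h : (a : ℕ) < k then B ⟨a, h⟩ else Set.univ).indicator
            (fun _ => (1 : ℝ)) (l a)
      = (Nat.factorial (n - k) : ℝ)
        * ∑ g ∈ Finset.univ.filter (Function.Injective : (Fin k → Fin n) → Prop),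
            ∑ π : Equiv.Perm (Fin k), sgn π
              * ∏ j : Fin k, ∫ x in B j,
                  (p ((g j : Fin n) : ℕ)).eval x * (p ((g (π j) : Fin n) : ℕ)).eval x
                    * w x := by
  classical
  have hTmeas : ∀ a : Fin n,
      MeasurableSet (if h : (a : ℕ) < k then B ⟨a, h⟩ else Set.univ) := by
    intro a
    by_cases h : (a : ℕ) < k
    · rw [dif_pos h]; exact hB _
    · rw [dif_neg h]; exact MeasurableSet.univ
  have hψint : ∀ i i' : ℕ,
      MeasureTheory.Integrable (fun x => (p i).eval x * (p i').eval x * w x) :=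
    fun i i' => psi_int hmom p i i'
  have hpt : (fun l : Fin n → ℝ =>
      (∑ σ : Equiv.Perm (Fin n), ∑ τ : Equiv.Perm (Fin n), (sgn σ * sgn τ)
        * ∏ a : Fin n, ((p ((σ a : Fin n) : ℕ)).eval (l a)
            * (p ((τ a : Fin n) : ℕ)).eval (l a) * w (l a)))
        * ∏ a : Fin n, (if h : (a : ℕ) < k then B ⟨a, h⟩ else Set.univ).indicator
            (fun _ => (1 : ℝ)) (l a))
      = fun l : Fin n → ℝ =>
        ∑ σ : Equiv.Perm (Fin n), ∑ τ : Equiv.Perm (Fin n), (sgn σ * sgn τ)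
          * ∏ a : Fin n, (if h : (a : ℕ) < k then B ⟨a, h⟩ else Set.univ).indicator
              (fun x => (p ((σ a : Fin n) : ℕ)).eval x * (p ((τ a : Fin n) : ℕ)).eval x
                * w x) (l a) := by
    funext l
    rw [Finset.sum_mul]
    refine Finset.sum_congr rfl (fun σ _ => ?_)
    rw [Finset.sum_mul]
    refine Finset.sum_congr rfl (fun τ _ => ?_)
    rw [mul_assoc]
    congr 1
    rw [← Finset.prod_mul_distrib]
    refine Finset.prod_congr rfl (fun a _ => ?_)
    rw [mul_comm]
    exact ind_one_mul _ (fun x => (p ((σ a : Fin n) : ℕ)).eval x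
      * (p ((τ a : Fin n) : ℕ)).eval x * w x) (l a)
  rw [hpt]
  rw [MeasureTheory.integral_finset_sum _ (fun σ _ =>
    MeasureTheory.integrable_finset_sum _ (fun τ _ =>
      (prod_ind_integrable _ hTmeas _ (fun a => hψint _ _)).const_mul _))]
  have hstep : ∀ σ : Equiv.Perm (Fin n),
      (∫ l : Fin n → ℝ, ∑ τ : Equiv.Perm (Fin n), (sgn σ * sgn τ)
        * ∏ a : Fin n, (if h : (a : ℕ) < k then B ⟨a, h⟩ else Set.univ).indicator
            (fun x => (p ((σ a : Fin n) : ℕ)).eval x * (p ((τ a : Fin n) : ℕ)).eval x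
              * w x) (l a))
      = ∑ π : Equiv.Perm (Fin k), sgn π
          * ∏ j : Fin k, ∫ x in B j,
              (p ((σ (Fin.castLE hkn j) : Fin n) : ℕ)).eval x
                * (p ((σ (Fin.castLE hkn (π j)) : Fin n) : ℕ)).eval x * w x := by
    intro σ
    rw [MeasureTheory.integral_finset_sum _ (fun τ _ =>
      (prod_ind_integrable _ hTmeas _ (fun a => hψint _ _)).const_mul _)]
    rw [← step34 hkn w p horth B σ]
    refine Finset.sum_congr rfl (fun τ _ => ?_)
    rw [MeasureTheory.integral_const_mul]
    congr 1
    exact prod_ind_integral _ hTmeas _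
  rw [Finset.sum_congr rfl (fun σ _ => hstep σ)]
  exact sum_perm_comp hkn (fun g => ∑ π : Equiv.Perm (Fin k), sgn π
    * ∏ j : Fin k, ∫ x in B j,
        (p ((g j : Fin n) : ℕ)).eval x * (p ((g (π j) : Fin n) : ℕ)).eval x * w x)

lemma core_norm (w : ℝ → ℝ) (hwm : Measurable w)
    (hmom : ∀ j : ℕ, MeasureTheory.Integrable (fun x => x ^ j * w x))
    (p : ℕ → Polynomial ℝ)
    (horth : ∀ i j, ∫ x, (p i).eval x * (p j).eval x * w x = if i = j then (1 : ℝ) else 0) :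
    ∫ l : Fin n → ℝ,
      (∑ σ : Equiv.Perm (Fin n), ∑ τ : Equiv.Perm (Fin n), (sgn σ * sgn τ)
        * ∏ a : Fin n, ((p ((σ a : Fin n) : ℕ)).eval (l a)
            * (p ((τ a : Fin n) : ℕ)).eval (l a) * w (l a)))
      = (Nat.factorial n : ℝ) := by
  have h := core (k := 0) (Nat.zero_le n) w hwm hmom p horth
    (fun j => Fin.elim0 j) (fun j => Fin.elim0 j)
  have h2 : ∀ l : Fin n → ℝ, ∏ a : Fin n,
      (if h : (a : ℕ) < 0 then (Fin.elim0 ⟨(a : ℕ), h⟩ : Set ℝ) else Set.univ).indicator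
        (fun _ => (1 : ℝ)) (l a) = 1 := by
    intro l
    refine Finset.prod_eq_one (fun a _ => ?_)
    rw [dif_neg (Nat.not_lt_zero _)]
    simp
  simp only [h2, mul_one] at h
  rw [h, Nat.sub_zero]
  have h3 : (Finset.univ.filter (Function.Injective : (Fin 0 → Fin n) → Prop))
      = Finset.univ := by
    refine Finset.filter_true_of_mem (fun g _ => ?_)
    intro a
    exact Fin.elim0 a
  rw [h3]
  have h4 : ∀ g : Fin 0 → Fin n,
      (∑ π : Equiv.Perm (Fin 0), sgn π * ∏ j : Fin 0, ∫ x in Fin.elim0 j,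
        (p ((g j : Fin n) : ℕ)).eval x * (p ((g (π j) : Fin n) : ℕ)).eval x * w x) = 1 := by
    intro g
    rw [Finset.univ_unique, Finset.sum_singleton]
    have : (default : Equiv.Perm (Fin 0)) = 1 := Subsingleton.elim _ _
    rw [this]
    have hsgn1 : sgn (1 : Equiv.Perm (Fin 0)) = 1 := by
      unfold sgn
      simp
    rw [hsgn1]
    simp
  rw [Finset.sum_congr rfl (fun g _ => h4 g)]
  simp

lemma det_kernel_expand (w : ℝ → ℝ) (hw0 : ∀ t : ℝ, 0 ≤ w t) (p : ℕ → Polynomial ℝ)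
    (x : Fin k → ℝ) :
    Matrix.det (Matrix.of fun a b : Fin k =>
        (∑ i ∈ Finset.range n, (p i).eval (x a) * (p i).eval (x b))
          * Real.sqrt (w (x a) * w (x b)))
      = ∑ σ : Equiv.Perm (Fin k), ∑ g : Fin k → Fin n, sgn σ
          * ∏ j : Fin k, ((p ((g (σ⁻¹ j) : Fin n) : ℕ)).eval (x j)
              * (p ((g j : Fin n) : ℕ)).eval (x j) * w (x j)) := by
  classical
  rw [Matrix.det_apply']
  refine Finset.sum_congr rfl (fun σ _ => ?_)
  have hsqrt : ∏ j : Fin k, Real.sqrt (w (x (σ j)) * w (x j)) = ∏ j : Fin k, w (x j) := by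
    have h1 : ∀ j : Fin k, Real.sqrt (w (x (σ j)) * w (x j))
        = Real.sqrt (w (x (σ j))) * Real.sqrt (w (x j)) :=
      fun j => Real.sqrt_mul (hw0 _) _
    rw [Finset.prod_congr rfl (fun j _ => h1 j), Finset.prod_mul_distrib,
      Equiv.prod_comp σ (fun j => Real.sqrt (w (x j))), ← Finset.prod_mul_distrib]
    exact Finset.prod_congr rfl (fun j _ => Real.mul_self_sqrt (hw0 _))
  have hsum : ∀ a b : Fin k, (∑ i ∈ Finset.range n, (p i).eval (x a) * (p i).eval (x b))
      = ∑ i : Fin n, (p (i : ℕ)).eval (x a) * (p (i : ℕ)).eval (x b) := by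
    intro a b
    rw [← Fin.sum_univ_eq_sum_range]
  simp only [Matrix.of_apply, hsum]
  rw [Finset.prod_mul_distrib, hsqrt, Finset.prod_univ_sum]
  rw [Fintype.piFinset_univ, Finset.sum_mul, Finset.mul_sum]
  refine Finset.sum_congr rfl (fun g _ => ?_)
  have hre : ∏ j : Fin k, (p ((g j : Fin n) : ℕ)).eval (x (σ j))
        * (p ((g j : Fin n) : ℕ)).eval (x j)
      = (∏ j : Fin k, (p ((g (σ⁻¹ j) : Fin n) : ℕ)).eval (x j))
        * ∏ j : Fin k, (p ((g j : Fin n) : ℕ)).eval (x j) := by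
    rw [Finset.prod_mul_distrib]
    congr 1
    rw [← Equiv.prod_comp σ (fun j => (p ((g (σ⁻¹ j) : Fin n) : ℕ)).eval (x j))]
    refine Finset.prod_congr rfl (fun j _ => ?_)
    rw [Equiv.Perm.inv_def, Equiv.symm_apply_apply]
  rw [hre]
  have hmerge : ∏ j : Fin k, ((p ((g (σ⁻¹ j) : Fin n) : ℕ)).eval (x j)
        * (p ((g j : Fin n) : ℕ)).eval (x j) * w (x j))
      = ((∏ j : Fin k, (p ((g (σ⁻¹ j) : Fin n) : ℕ)).eval (x j))
        * ∏ j : Fin k, (p ((g j : Fin n) : ℕ)).eval (x j)) * ∏ j : Fin k, w (x j) := by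
    rw [Finset.prod_mul_distrib, Finset.prod_mul_distrib]
  rw [hmerge]
  unfold sgn
  ring

lemma pi_set_integral (B : Fin k → Set ℝ) (hB : ∀ j, MeasurableSet (B j))
    (F : Fin k → ℝ → ℝ) (hF : ∀ j, MeasureTheory.Integrable (F j)) :
    ∫ x in Set.univ.pi B, ∏ j : Fin k, F j (x j) = ∏ j : Fin k, ∫ t in B j, F j t := by
  rw [← MeasureTheory.integral_indicator (MeasurableSet.univ_pi hB)]
  have hpt : (Set.univ.pi B).indicator (fun x : Fin k → ℝ => ∏ j : Fin k, F j (x j))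
      = fun x : Fin k → ℝ => ∏ j : Fin k, (B j).indicator (F j) (x j) := by
    funext x
    by_cases hx : x ∈ Set.univ.pi B
    · rw [Set.indicator_of_mem hx]
      refine Finset.prod_congr rfl (fun j _ => ?_)
      rw [Set.indicator_of_mem (hx j (Set.mem_univ j))]
    · rw [Set.indicator_of_notMem hx]
      rw [Set.mem_univ_pi] at hx
      push_neg at hx
      obtain ⟨j, hj⟩ := hx
      exact (Finset.prod_eq_zero (Finset.mem_univ j)
        (Set.indicator_of_notMem hj _)).symm
  rw [hpt]
  exact prod_ind_integral B hB F

lemma rhs_int (w : ℝ → ℝ) (hw0 : ∀ t : ℝ, 0 ≤ w t) (hwm : Measurable w)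
    (hmom : ∀ j : ℕ, MeasureTheory.Integrable (fun x => x ^ j * w x))
    (p : ℕ → Polynomial ℝ) (B : Fin k → Set ℝ) (hB : ∀ j, MeasurableSet (B j)) :
    ∫ x in Set.univ.pi B, Matrix.det (Matrix.of fun a b : Fin k =>
        (∑ i ∈ Finset.range n, (p i).eval (x a) * (p i).eval (x b))
          * Real.sqrt (w (x a) * w (x b)))
      = ∑ σ : Equiv.Perm (Fin k), ∑ g : Fin k → Fin n, sgn σ
          * ∏ j : Fin k, ∫ t in B j, (p ((g (σ⁻¹ j) : Fin n) : ℕ)).eval t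
              * (p ((g j : Fin n) : ℕ)).eval t * w t := by
  classical
  rw [show (fun x : Fin k → ℝ => Matrix.det (Matrix.of fun a b : Fin k =>
      (∑ i ∈ Finset.range n, (p i).eval (x a) * (p i).eval (x b))
        * Real.sqrt (w (x a) * w (x b))))
    = fun x : Fin k → ℝ => ∑ σ : Equiv.Perm (Fin k), ∑ g : Fin k → Fin n, sgn σ
        * ∏ j : Fin k, ((p ((g (σ⁻¹ j) : Fin n) : ℕ)).eval (x j)
            * (p ((g j : Fin n) : ℕ)).eval (x j) * w (x j))
    from funext (fun x => det_kernel_expand w hw0 p x)]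
  rw [MeasureTheory.integral_finset_sum (μ := (volume : Measure (Fin k → ℝ)).restrict (Set.univ.pi B)) _ (fun σ _ =>
    (MeasureTheory.integrable_finset_sum _ (fun g _ =>
      ((MeasureTheory.Integrable.fintype_prod (𝕜 := ℝ)
        (fun j => psi_int hmom p _ _)).const_mul _))).integrableOn)]
  refine Finset.sum_congr rfl (fun σ _ => ?_)
  rw [MeasureTheory.integral_finset_sum (μ := (volume : Measure (Fin k → ℝ)).restrict (Set.univ.pi B)) _ (fun g _ =>
    (((MeasureTheory.Integrable.fintype_prod (𝕜 := ℝ)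
      (fun j => psi_int hmom p _ _)).const_mul _)).integrableOn)]
  refine Finset.sum_congr rfl (fun g _ => ?_)
  rw [MeasureTheory.integral_const_mul]
  congr 1
  exact pi_set_integral B hB _ (fun j => psi_int hmom p _ _)

lemma sum_det_match (w : ℝ → ℝ) (p : ℕ → Polynomial ℝ) (B : Fin k → Set ℝ) :
    ∑ σ : Equiv.Perm (Fin k), ∑ g : Fin k → Fin n, sgn σ
        * ∏ j : Fin k, ∫ t in B j, (p ((g (σ⁻¹ j) : Fin n) : ℕ)).eval t
            * (p ((g j : Fin n) : ℕ)).eval t * w t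
      = ∑ g ∈ Finset.univ.filter (Function.Injective : (Fin k → Fin n) → Prop),
          ∑ π : Equiv.Perm (Fin k), sgn π
            * ∏ j : Fin k, ∫ t in B j, (p ((g j : Fin n) : ℕ)).eval t
                * (p ((g (π j) : Fin n) : ℕ)).eval t * w t := by
  classical
  set J : Fin k → Fin n → Fin n → ℝ := fun j i i' =>
    ∫ t in B j, (p (i : ℕ)).eval t * (p (i' : ℕ)).eval t * w t with hJ
  have hJsym : ∀ (j : Fin k) (i i' : Fin n), J j i i' = J j i' i := by
    intro j i i'
    rw [hJ]
    simp only
    congr 1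
    funext t
    ring
  have hdet : ∀ g : Fin k → Fin n,
      (Matrix.of fun a b : Fin k => J b (g a) (g b)).det
        = ∑ σ : Equiv.Perm (Fin k), sgn σ * ∏ j : Fin k, J j (g (σ j)) (g j) := by
    intro g
    rw [Matrix.det_apply']
    rfl
  rw [Finset.sum_comm]
  have hstep : ∀ g : Fin k → Fin n,
      (∑ σ : Equiv.Perm (Fin k), sgn σ * ∏ j : Fin k, J j (g (σ⁻¹ j)) (g j))
        = (Matrix.of fun a b : Fin k => J b (g a) (g b)).det := by
    intro g
    rw [hdet g]
    refine Fintype.sum_equiv (Equiv.inv (Equiv.Perm (Fin k))) _ _ (fun σ => ?_)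
    simp only [Equiv.inv_apply]
    congr 1
    unfold sgn
    rw [Equiv.Perm.sign_inv]
  rw [Finset.sum_congr rfl (fun g _ => hstep g)]
  rw [← Finset.sum_filter_of_ne (p := (Function.Injective : (Fin k → Fin n) → Prop))
    (fun g _ hne => ?_)]
  swap
  · by_contra hginj
    apply hne
    rw [Function.Injective] at hginj
    push_neg at hginj
    obtain ⟨a1, a2, hga, hane⟩ := hginj
    refine Matrix.det_zero_of_row_eq hane (funext fun b => ?_)
    simp only [Matrix.of_apply, hga]
  refine Finset.sum_congr rfl (fun g _ => ?_)
  rw [hdet g]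
  refine Finset.sum_congr rfl (fun π _ => ?_)
  congr 1
  refine Finset.prod_congr rfl (fun j _ => ?_)
  rw [hJsym]

lemma prod_ind_cast (hkn : k ≤ n) (B : Fin k → Set ℝ) (l : Fin n → ℝ) :
    ∏ a : Fin n, (if h : (a : ℕ) < k then B ⟨a, h⟩ else Set.univ).indicator
        (fun _ => (1 : ℝ)) (l a)
      = ∏ j : Fin k, (B j).indicator (fun _ => (1 : ℝ)) (l (Fin.castLE hkn j)) := by
  classical
  rw [← Finset.prod_filter_mul_prod_filter_not Finset.univ (fun a : Fin n => (a : ℕ) < k)]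
  have hhigh : ∏ a ∈ Finset.univ.filter (fun a : Fin n => ¬ ((a : ℕ) < k)),
      (if h : (a : ℕ) < k then B ⟨a, h⟩ else Set.univ).indicator (fun _ => (1 : ℝ)) (l a)
      = 1 := by
    refine Finset.prod_eq_one (fun a ha => ?_)
    rw [dif_neg (Finset.mem_filter.mp ha).2]
    simp
  rw [hhigh, mul_one]
  refine Finset.prod_bij'
    (i := fun (a : Fin n) (ha : a ∈ Finset.univ.filter (fun a : Fin n => (a : ℕ) < k)) =>
      (⟨(a : ℕ), (Finset.mem_filter.mp ha).2⟩ : Fin k))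
    (j := fun j _ => Fin.castLE hkn j)
    (fun _ _ => Finset.mem_univ _) ?_ ?_ ?_ ?_
  · intro j _
    refine Finset.mem_filter.mpr ⟨Finset.mem_univ _, ?_⟩
    simpa using j.isLt
  · intro a ha
    exact Fin.ext rfl
  · intro j _
    exact Fin.ext rfl
  · intro a ha
    have h : (a : ℕ) < k := (Finset.mem_filter.mp ha).2
    have hc : Fin.castLE hkn (⟨(a : ℕ), h⟩ : Fin k) = a := Fin.ext rfl
    rw [dif_pos h, hc]

lemma pairprod_perm (l : Fin n → ℝ) (s : Equiv.Perm (Fin n)) :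
    (∏ q ∈ Finset.univ.filter (fun q : Fin n × Fin n => q.1 < q.2),
        (l (s q.1) - l (s q.2))) ^ 2
      = (∏ q ∈ Finset.univ.filter (fun q : Fin n × Fin n => q.1 < q.2),
          (l q.1 - l q.2)) ^ 2 := by
  have h1 := pairprod_sq (fun a => l (s a))
  have h2 := pairprod_sq l
  rw [h1, h2]
  have h3 : Matrix.vandermonde (fun a => l (s a))
      = Matrix.of (fun i j : Fin n => Matrix.vandermonde l (s i) j) := by
    ext i j
    rfl
  rw [h3]
  have h5 : (Matrix.of fun i j : Fin n => Matrix.vandermonde l (s i) j).det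
      = ((Equiv.Perm.sign s : ℤ) : ℝ) * (Matrix.vandermonde l).det :=
    Matrix.det_permute s (Matrix.vandermonde l)
  rw [h5, mul_pow]
  rcases Int.units_eq_one_or (Equiv.Perm.sign s) with hs | hs <;> rw [hs] <;> norm_num

end core
open MeasureTheory Polynomial

/-- an orthogonal polynomial ensemble with density proportional to
`Δ_n(λ)² ∏ w(λ_i)` is a determinantal point process with kernel
`K(x,y) = Σ_{i<n} p_i(x) p_i(y) √(w(x) w(y))`. -/
theorem stmt12 (n : ℕ) (w : ℝ → ℝ) (hw0 : ∀ x, 0 ≤ w x) (hwm : Measurable w)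
    (hwint : Integrable w) (hmom : ∀ j : ℕ, Integrable (fun x => x ^ j * w x))
    (p : ℕ → Polynomial ℝ) (hdeg : ∀ i, (p i).degree = (i : ℕ))
    (horth : ∀ i j, ∫ x, (p i).eval x * (p j).eval x * w x
        = if i = j then (1 : ℝ) else 0)
    (C : ℝ) (hC : 0 < C) (μ : Measure (Fin n → ℝ)) [IsProbabilityMeasure μ]
    (hμ : μ = volume.withDensity (fun l => ENNReal.ofReal
      (C * (∏ q ∈ Finset.univ.filter (fun q : Fin n × Fin n => q.1 < q.2),
          (l q.1 - l q.2)) ^ 2 * ∏ i, w (l i))))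
    (k : ℕ) (B : Fin k → Set ℝ) (hBmeas : ∀ j, MeasurableSet (B j))
    (hBdisj : Pairwise (Function.onFun Disjoint B)) :
    (∫ l, ∏ j : Fin k, (∑ i : Fin n, (B j).indicator (fun _ => (1 : ℝ)) (l i)) ∂μ)
      = ∫ x in Set.univ.pi B,
          Matrix.det (Matrix.of fun a b : Fin k =>
            (∑ i ∈ Finset.range n, (p i).eval (x a) * (p i).eval (x b))
              * Real.sqrt (w (x a) * w (x b))) := by
  classical
  set ρ : (Fin n → ℝ) → ℝ := fun l =>
    C * (∏ q ∈ Finset.univ.filter (fun q : Fin n × Fin n => q.1 < q.2),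
        (l q.1 - l q.2)) ^ 2 * ∏ i, w (l i) with hρdef
  set S : (Fin n → ℝ) → ℝ := fun l =>
    ∑ σ : Equiv.Perm (Fin n), ∑ τ : Equiv.Perm (Fin n), (sgn σ * sgn τ)
      * ∏ a : Fin n, ((p ((σ a : Fin n) : ℕ)).eval (l a)
          * (p ((τ a : Fin n) : ℕ)).eval (l a) * w (l a)) with hSdef
  set cγ : ℝ := (∏ j : Fin n, ((p (j : ℕ)).leadingCoeff)⁻¹) ^ 2 with hcγdef
  have hρS : ρ = fun l => (C * cγ) * S l := by
    funext l
    rw [hρdef]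
    simp only
    rw [mul_assoc, density_expand p hdeg w l, hcγdef, hSdef, mul_assoc]
  have hρ0 : ∀ l, 0 ≤ ρ l := by
    intro l
    refine mul_nonneg (mul_nonneg hC.le (sq_nonneg _)) ?_
    exact Finset.prod_nonneg (fun i _ => hw0 _)
  have hρmeas : Measurable ρ := by
    refine Measurable.mul (Measurable.mul measurable_const ?_) ?_
    · exact (Finset.measurable_prod _ (fun q _ =>
        (measurable_pi_apply q.1).sub (measurable_pi_apply q.2))).pow_const 2
    · exact Finset.measurable_prod _ (fun i _ => hwm.comp (measurable_pi_apply i))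
  have hμeq : ∀ F : (Fin n → ℝ) → ℝ, ∫ l, F l ∂μ = ∫ l, ρ l * F l := by
    intro F
    rw [hμ]
    have hm : Measurable fun l : Fin n → ℝ => (ρ l).toNNReal := hρmeas.real_toNNReal
    have h1 : (fun l : Fin n → ℝ => ENNReal.ofReal
        (C * (∏ q ∈ Finset.univ.filter (fun q : Fin n × Fin n => q.1 < q.2),
          (l q.1 - l q.2)) ^ 2 * ∏ i, w (l i)))
        = fun l => ((ρ l).toNNReal : ENNReal) := rfl
    rw [h1, integral_withDensity_eq_integral_smul hm F]
    refine integral_congr_ae (Filter.Eventually.of_forall (fun l => ?_))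
    show (ρ l).toNNReal • F l = ρ l * F l
    rw [NNReal.smul_def, smul_eq_mul, Real.coe_toNNReal _ (hρ0 l)]
  have hSint : Integrable S := by
    rw [hSdef]
    refine integrable_finset_sum _ (fun σ _ => integrable_finset_sum _ (fun τ _ => ?_))
    exact (MeasureTheory.Integrable.fintype_prod (𝕜 := ℝ)
      (fun a => psi_int hmom p _ _)).const_mul _
  have hρint : Integrable ρ := by
    rw [hρS]
    exact hSint.const_mul _
  have hnorm : (C * cγ) * (Nat.factorial n : ℝ) = 1 := by
    have h1 : ∫ l, ρ l = 1 := by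
      have h2 := hμeq (fun _ => 1)
      simp only [mul_one] at h2
      rw [MeasureTheory.integral_const] at h2
      simp only [measure_univ, ENNReal.toReal_one, smul_eq_mul, one_mul, probReal_univ] at h2
      exact h2.symm
    rw [hρS, MeasureTheory.integral_const_mul, hSdef] at h1
    rw [core_norm w hwm hmom p horth] at h1
    exact h1
  rw [hμeq]
  -- expand the product of counts
  have hexp : (fun l : Fin n → ℝ => ρ l
      * ∏ j : Fin k, (∑ i : Fin n, (B j).indicator (fun _ => (1 : ℝ)) (l i)))
      = fun l => ∑ f : Fin k → Fin n, ρ l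
          * ∏ j : Fin k, (B j).indicator (fun _ => (1 : ℝ)) (l (f j)) := by
    funext l
    rw [show (∏ j : Fin k, (∑ i : Fin n, (B j).indicator (fun _ => (1 : ℝ)) (l i)))
        = ∑ f ∈ Fintype.piFinset (fun _ : Fin k => (Finset.univ : Finset (Fin n))),
            ∏ j : Fin k, (B j).indicator (fun _ => (1 : ℝ)) (l (f j))
      from Finset.prod_univ_sum _ _]
    rw [Fintype.piFinset_univ, Finset.mul_sum]
  rw [hexp]
  have hbd : ∀ (f : Fin k → Fin n),
      Integrable (fun l : Fin n → ℝ =>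
        ρ l * ∏ j : Fin k, (B j).indicator (fun _ => (1 : ℝ)) (l (f j))) := by
    intro f
    have : (fun l : Fin n → ℝ =>
        ρ l * ∏ j : Fin k, (B j).indicator (fun _ => (1 : ℝ)) (l (f j)))
        = fun l => (∏ j : Fin k, (B j).indicator (fun _ => (1 : ℝ)) (l (f j))) * ρ l :=
      funext (fun l => mul_comm _ _)
    rw [this]
    refine MeasureTheory.Integrable.bdd_mul (c := 1) hρint ?_ ?_
    · refine (Finset.measurable_prod _ (fun j _ => ?_)).aestronglyMeasurable
      exact (measurable_const.indicator (hBmeas j)).comp (measurable_pi_apply (f j))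
    · refine Filter.Eventually.of_forall (fun l => ?_)
      have hind01 : ∀ (s : Set ℝ) (y : ℝ), 0 ≤ s.indicator (fun _ => (1 : ℝ)) y
          ∧ s.indicator (fun _ => (1 : ℝ)) y ≤ 1 := by
        intro s y
        by_cases h : y ∈ s <;> simp [h]
      rw [Real.norm_eq_abs, abs_of_nonneg (Finset.prod_nonneg (fun j _ =>
        (hind01 (B j) (l (f j))).1))]
      exact Finset.prod_le_one (fun j _ => (hind01 (B j) (l (f j))).1)
        (fun j _ => (hind01 (B j) (l (f j))).2)
  rw [MeasureTheory.integral_finset_sum _ (fun f _ => hbd f)]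
  -- non-injective terms vanish
  have hzero : ∀ f : Fin k → Fin n, ¬ Function.Injective f →
      (fun l : Fin n → ℝ =>
        ρ l * ∏ j : Fin k, (B j).indicator (fun _ => (1 : ℝ)) (l (f j)))
      = fun _ => (0 : ℝ) := by
    intro f hf
    rw [Function.Injective] at hf
    push_neg at hf
    obtain ⟨j1, j2, hfj, hjne⟩ := hf
    funext l
    have hprod : ∏ j : Fin k, (B j).indicator (fun _ => (1 : ℝ)) (l (f j)) = 0 := by
      by_cases h : l (f j1) ∈ B j1
      · refine Finset.prod_eq_zero (Finset.mem_univ j2) ?_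
        have h2 : l (f j2) ∉ B j2 := by
          rw [← hfj]
          exact fun hmem => (hBdisj hjne).le_bot ⟨h, hmem⟩
        rw [Set.indicator_of_notMem h2]
      · refine Finset.prod_eq_zero (Finset.mem_univ j1) ?_
        rw [Set.indicator_of_notMem h]
    rw [hprod, mul_zero]
  rw [← Finset.sum_filter_add_sum_filter_not Finset.univ
    (Function.Injective : (Fin k → Fin n) → Prop)]
  rw [show ∑ f ∈ Finset.univ.filter
      (fun f : Fin k → Fin n => ¬ Function.Injective f),
      ∫ l, ρ l * ∏ j : Fin k, (B j).indicator (fun _ => (1 : ℝ)) (l (f j))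
      = 0 from Finset.sum_eq_zero (fun f hf => by
        rw [hzero f (Finset.mem_filter.mp hf).2, integral_zero]), add_zero]
  -- case split on k ≤ n
  by_cases hkn : k ≤ n
  swap
  · have hempty : Finset.univ.filter (Function.Injective : (Fin k → Fin n) → Prop)
        = ∅ := by
      refine Finset.filter_eq_empty_iff.mpr (fun f _ => fun hf => hkn ?_)
      simpa using Fintype.card_le_of_injective f hf
    rw [hempty, Finset.sum_empty]
    rw [rhs_int w hw0 hwm hmom p B hBmeas, sum_det_match w p B, hempty, Finset.sum_empty]
  -- symmetry reduction
  have hsym : ∀ f ∈ Finset.univ.filter (Function.Injective : (Fin k → Fin n) → Prop),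
      ∫ l, ρ l * ∏ j : Fin k, (B j).indicator (fun _ => (1 : ℝ)) (l (f j))
      = ∫ l, ρ l * ∏ j : Fin k,
          (B j).indicator (fun _ => (1 : ℝ)) (l (Fin.castLE hkn j)) := by
    intro f hf
    obtain ⟨s, hs⟩ := exists_perm_extend hkn f (Finset.mem_filter.mp hf).2
    have hmp := MeasureTheory.volume_measurePreserving_piCongrLeft
      (fun _ : Fin n => ℝ) (s.symm : Fin n ≃ Fin n)
    conv_rhs => rw [← hmp.integral_comp']
    refine integral_congr_ae (Filter.Eventually.of_forall (fun l => ?_))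
    have hT : ∀ a : Fin n,
        (MeasurableEquiv.piCongrLeft (fun _ : Fin n => ℝ) (s.symm : Fin n ≃ Fin n)) l a
          = l (s a) := by
      intro a
      have h5 := Equiv.piCongrLeft_apply_apply (fun _ : Fin n => ℝ)
        (s.symm : Fin n ≃ Fin n) l (s a)
      rw [Equiv.symm_apply_apply] at h5
      rw [show ⇑(MeasurableEquiv.piCongrLeft (fun _ : Fin n => ℝ)
          (s.symm : Fin n ≃ Fin n))
        = ⇑(Equiv.piCongrLeft (fun _ : Fin n => ℝ) (s.symm : Fin n ≃ Fin n))
        from MeasurableEquiv.coe_piCongrLeft _]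
      exact h5
    show ρ l * ∏ j : Fin k, (B j).indicator (fun _ => (1 : ℝ)) (l (f j))
      = ρ ((MeasurableEquiv.piCongrLeft (fun _ : Fin n => ℝ)
            (s.symm : Fin n ≃ Fin n)) l)
          * ∏ j : Fin k, (B j).indicator (fun _ => (1 : ℝ))
              ((MeasurableEquiv.piCongrLeft (fun _ : Fin n => ℝ)
                (s.symm : Fin n ≃ Fin n)) l (Fin.castLE hkn j))
    have hρperm : ρ ((MeasurableEquiv.piCongrLeft (fun _ : Fin n => ℝ)
        (s.symm : Fin n ≃ Fin n)) l) = ρ l := by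
      rw [show ((MeasurableEquiv.piCongrLeft (fun _ : Fin n => ℝ)
          (s.symm : Fin n ≃ Fin n)) l) = fun a => l (s a) from funext hT]
      rw [hρdef]
      simp only
      rw [pairprod_perm l s, Equiv.prod_comp s (fun i => w (l i))]
    rw [hρperm]
    congr 1
    refine Finset.prod_congr rfl (fun j _ => ?_)
    rw [hT (Fin.castLE hkn j), hs j]
    
  rw [Finset.sum_congr rfl hsym, Finset.sum_const]
  -- compute the castLE integral via `core`
  have hIcast : ∫ l, ρ l * ∏ j : Fin k,
        (B j).indicator (fun _ => (1 : ℝ)) (l (Fin.castLE hkn j))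
      = (C * cγ) * ((Nat.factorial (n - k) : ℝ)
        * ∑ g ∈ Finset.univ.filter (Function.Injective : (Fin k → Fin n) → Prop),
            ∑ π : Equiv.Perm (Fin k), sgn π
              * ∏ j : Fin k, ∫ x in B j,
                  (p ((g j : Fin n) : ℕ)).eval x * (p ((g (π j) : Fin n) : ℕ)).eval x
                    * w x) := by
    have hpt : (fun l : Fin n → ℝ => ρ l * ∏ j : Fin k,
        (B j).indicator (fun _ => (1 : ℝ)) (l (Fin.castLE hkn j)))
        = fun l => (C * cγ) * (S l * ∏ a : Fin n,
            (if h : (a : ℕ) < k then B ⟨a, h⟩ else Set.univ).indicator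
              (fun _ => (1 : ℝ)) (l a)) := by
      funext l
      rw [hρS]
      simp only
      rw [prod_ind_cast hkn B l, mul_assoc]
    rw [hpt, MeasureTheory.integral_const_mul]
    congr 1
    rw [hSdef]
    exact core hkn w hwm hmom p horth B hBmeas
  rw [hIcast]
  -- cardinality bookkeeping
  have hcard : ((Finset.univ.filter
      (Function.Injective : (Fin k → Fin n) → Prop)).card : ℝ)
      * (Nat.factorial (n - k) : ℝ) = (Nat.factorial n : ℝ) := by
    have h1 : (Finset.univ.filter
        (Function.Injective : (Fin k → Fin n) → Prop)).card
        = Fintype.card (Fin k ↪ Fin n) := by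
      rw [← Fintype.card_subtype]
      exact Fintype.card_congr (Equiv.subtypeInjectiveEquivEmbedding (Fin k) (Fin n))
    rw [h1, Fintype.card_embedding_eq, Fintype.card_fin, Fintype.card_fin]
    rw [← Nat.cast_mul, mul_comm, Nat.factorial_mul_descFactorial hkn]
  rw [rhs_int w hw0 hwm hmom p B hBmeas, sum_det_match w p B]
  rw [nsmul_eq_mul]
  set Sinner : ℝ := ∑ g ∈ Finset.univ.filter (Function.Injective : (Fin k → Fin n) → Prop),
      ∑ π : Equiv.Perm (Fin k), sgn π
        * ∏ j : Fin k, ∫ x in B j,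
            (p ((g j : Fin n) : ℕ)).eval x * (p ((g (π j) : Fin n) : ℕ)).eval x * w x
    with hSinner
  calc ((Finset.univ.filter (Function.Injective : (Fin k → Fin n) → Prop)).card : ℝ)
      * ((C * cγ) * ((Nat.factorial (n - k) : ℝ) * Sinner))
      = (((Finset.univ.filter (Function.Injective : (Fin k → Fin n) → Prop)).card : ℝ)
        * (Nat.factorial (n - k) : ℝ)) * ((C * cγ) * Sinner) := by ring
    _ = ((Nat.factorial n : ℝ) * (C * cγ)) * Sinner := by rw [hcard]; ring
    _ = Sinner := by rw [mul_comm (Nat.factorial n : ℝ) (C * cγ), hnorm, one_mul]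
end

section
/- Minor interlacing (Cauchy/Rayleigh): if M is an n×n complex Hermitian matrix with ordered eigenvalues λ_1 ≥ ... ≥ λ_n, and β_1 ≥ ... ≥ β_{n−1} are the ordered eigenvalues of the principal (n−1)×(n−1) submatrix obtained by deleting the last row and column, then λ_i ≥ β_i ≥ λ_{i+1} for all i = 1,...,n−1. -/
open Polynomial

open Polynomial Matrix

lemma charpoly_unitary_conj {m : Type*} [Fintype m] [DecidableEq m]
    (P D : Matrix m m ℂ) (hP : P ∈ Matrix.unitaryGroup m ℂ) :
    (P * D * star P).charpoly = D.charpoly := by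
  have hPQ : P * star P = 1 := (Matrix.mem_unitaryGroup_iff).mp hP
  have hQP : star P * P = 1 := (Matrix.mem_unitaryGroup_iff').mp hP
  have hcomm : P.map C * scalar m X = scalar m X * P.map C :=
    ((scalar_commute X (fun r => Commute.all X r) (P.map C))).symm
  have hc : charmatrix (P * D * star P)
      = P.map C * charmatrix D * (star P).map C := by
    unfold charmatrix
    simp only [RingHom.mapMatrix_apply]
    rw [mul_sub, sub_mul, hcomm]
    congr 1
    · rw [mul_assoc, ← Matrix.map_mul, hPQ]
      simp
    · simp [Matrix.map_mul, mul_assoc]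
  rw [Matrix.charpoly, Matrix.charpoly, hc, det_mul, det_mul, mul_comm, ← mul_assoc,
    ← det_mul, ← Matrix.map_mul, hQP]
  simp

lemma hermitian_charpoly_prod {m : Type*} [Fintype m] [DecidableEq m] [LinearOrder m]
    {A : Matrix m m ℂ} (hA : A.IsHermitian) :
    A.charpoly = ∏ i, (X - C ((hA.eigenvalues i : ℝ) : ℂ)) := by
  have h1 := hA.spectral_theorem
  rw [Unitary.conjStarAlgAut_apply] at h1
  have h2 := charpoly_unitary_conj (hA.eigenvectorUnitary : Matrix m m ℂ)
    (diagonal (RCLike.ofReal ∘ hA.eigenvalues)) (hA.eigenvectorUnitary).2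
  rw [← h1] at h2
  rw [h2, Matrix.charpoly_of_upperTriangular _ (Matrix.blockTriangular_diagonal _)]
  simp

open Polynomial

lemma perm_of_prod_eq {m : ℕ} (f g : Fin m → ℝ) (hf : Antitone f)
    (h : ∏ i, (X - C ((f i : ℝ) : ℂ)) = ∏ i, (X - C ((g i : ℝ) : ℂ))) :
    ∃ σ : Equiv.Perm (Fin m), ∀ i, g (σ i) = f i := by
  -- multiset equality over ℂ
  have hroots : (Finset.univ.val.map fun i => ((f i : ℝ) : ℂ))
      = Finset.univ.val.map fun i => ((g i : ℝ) : ℂ) := by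
    have h1 := congrArg Polynomial.roots h
    rw [Finset.prod_eq_multiset_prod, Finset.prod_eq_multiset_prod] at h1
    rw [show (fun i : Fin m => X - C ((f i : ℝ) : ℂ)) = (fun a : ℂ => X - C a) ∘ (fun i => ((f i : ℝ) : ℂ)) from rfl,
      show (fun i : Fin m => X - C ((g i : ℝ) : ℂ)) = (fun a : ℂ => X - C a) ∘ (fun i => ((g i : ℝ) : ℂ)) from rfl,
      ← Multiset.map_map, ← Multiset.map_map,
      Polynomial.roots_multiset_prod_X_sub_C, Polynomial.roots_multiset_prod_X_sub_C] at h1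
    exact h1
  have hms : (Finset.univ.val.map f) = Finset.univ.val.map g := by
    apply Multiset.map_injective (f := (Complex.ofReal : ℝ → ℂ)) Complex.ofReal_injective
    rwa [Multiset.map_map, Multiset.map_map]
  set τ := Tuple.sort (fun i => OrderDual.toDual (g i)) with hτ
  have hmono : Monotone ((fun i => OrderDual.toDual (g i)) ∘ τ) := Tuple.monotone_sort _
  have hanti : Antitone (g ∘ τ) := fun a b hab => hmono hab
  -- lists
  have hperm : (List.ofFn f).Perm (List.ofFn (g ∘ τ)) := by
    have h1 : (List.ofFn f).Perm (List.ofFn g) := by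
      rw [← Multiset.coe_eq_coe]
      have e : ∀ h : Fin m → ℝ, ((List.ofFn h : List ℝ) : Multiset ℝ) = Finset.univ.val.map h := by
        intro h
        rw [List.ofFn_eq_map, Fin.univ_def]
        rfl
      rw [e f, e g]
      exact hms
    exact h1.trans (τ.ofFn_comp_perm g).symm
  have hsorted1 : (List.ofFn f).Pairwise (fun a b => b ≤ a) :=
    List.pairwise_ofFn.mpr fun i j hij => hf hij.le
  have hsorted2 : (List.ofFn (g ∘ τ)).Pairwise (fun a b => b ≤ a) :=
    List.pairwise_ofFn.mpr fun i j hij => hanti hij.le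
  have : IsAntisymm ℝ (fun a b => b ≤ a) := ⟨fun a b h1 h2 => le_antisymm h2 h1⟩
  have heq : List.ofFn f = List.ofFn (g ∘ τ) :=
    List.Perm.eq_of_pairwise (fun a b _ _ h1 h2 => le_antisymm h2 h1) hsorted1 hsorted2 hperm
  have hfeq : f = g ∘ τ := by
    funext i
    have := List.ofFn_injective heq
    exact congrFun this i
  exact ⟨τ, fun i => (congrFun hfeq i).symm⟩

open Finset
open scoped InnerProductSpace ComplexConjugate

lemma rayleigh_span {r m : ℕ} (T : EuclideanSpace ℂ (Fin m) →ₗ[ℂ] EuclideanSpace ℂ (Fin m))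
    (u : Fin r → EuclideanSpace ℂ (Fin m)) (hu : Orthonormal ℂ u)
    (μ : Fin r → ℝ)
    (hT : ∀ i j, ⟪u i, T (u j)⟫_ℂ = if i = j then (μ i : ℂ) else 0)
    (s : Finset (Fin r)) (x : EuclideanSpace ℂ (Fin m))
    (hx : x ∈ Submodule.span ℂ (u '' s)) :
    ∃ d : Fin r → ℝ, (∀ i, 0 ≤ d i) ∧ ‖x‖ ^ 2 = ∑ i ∈ s, d i ∧
      (⟪x, T x⟫_ℂ).re = ∑ i ∈ s, μ i * d i := by
  classical
  have huinj : Function.Injective u := hu.linearIndependent.injective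
  rw [← Finset.coe_image, Submodule.mem_span_finset] at hx
  obtain ⟨f, -, hf⟩ := hx
  set a : Fin r → ℂ := fun i => f (u i) with ha
  have hxa : x = ∑ i ∈ s, a i • u i := by
    rw [← hf, Finset.sum_image (fun i _ j _ h => huinj h)]
  have key : ∀ y : EuclideanSpace ℂ (Fin m),
      ⟪x, y⟫_ℂ = ∑ i ∈ s, conj (a i) * ⟪u i, y⟫_ℂ := by
    intro y
    rw [hxa, sum_inner]
    simp [inner_smul_left]
  have huy : ∀ i, ⟪u i, x⟫_ℂ = ∑ j ∈ s, a j * ⟪u i, u j⟫_ℂ := by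
    intro i
    rw [hxa, inner_sum]
    simp [inner_smul_right]
  have huy' : ∀ i ∈ s, ⟪u i, x⟫_ℂ = a i := by
    intro i hi
    rw [huy i, Finset.sum_eq_single i]
    · simp [orthonormal_iff_ite.mp hu, hu.1 i]
    · intro j hj hne
      simp [orthonormal_iff_ite.mp hu, (Ne.symm hne)]
    · intro h; exact absurd hi h
  have huTx : ∀ i ∈ s, ⟪u i, T x⟫_ℂ = a i * (μ i : ℂ) := by
    intro i hi
    have : T x = ∑ j ∈ s, a j • T (u j) := by
      rw [hxa, map_sum]; simp
    rw [this, inner_sum]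
    simp only [inner_smul_right, hT]
    rw [Finset.sum_eq_single i]
    · simp
    · intro j hj hne; simp [Ne.symm hne]
    · intro h; exact absurd hi h
  refine ⟨fun i => ‖a i‖ ^ 2, fun i => sq_nonneg _, ?_, ?_⟩
  · have : (‖x‖ : ℝ) ^ 2 = (⟪x, x⟫_ℂ).re := by
      rw [inner_self_eq_norm_sq_to_K (𝕜 := ℂ), ← RCLike.ofReal_pow]
      norm_cast
    rw [this, key x]
    rw [Complex.re_sum]
    apply Finset.sum_congr rfl
    intro i hi
    rw [huy' i hi]
    simp only [Complex.mul_re, Complex.conj_re, Complex.conj_im, 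
      Complex.sq_norm, Complex.normSq_apply]
    ring
  · rw [key (T x), Complex.re_sum]
    apply Finset.sum_congr rfl
    intro i hi
    rw [huTx i hi]
    simp only [Complex.mul_re, Complex.mul_im, Complex.conj_re, Complex.conj_im,
      Complex.ofReal_re, Complex.ofReal_im, Complex.sq_norm,
      Complex.normSq_apply]
    ring

open Finset Submodule

lemma finrank_span_on {r m : ℕ} (u : Fin r → EuclideanSpace ℂ (Fin m))
    (hu : Orthonormal ℂ u) (s : Finset (Fin r)) :
    Module.finrank ℂ (Submodule.span ℂ (u '' s)) = s.card := by
  classical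
  have hli : LinearIndependent ℂ ((↑) : (u '' ↑s) → EuclideanSpace ℂ (Fin m)) :=
    LinearIndepOn.id_image (hu.linearIndependent.comp _ Subtype.val_injective)
  rw [finrank_span_set_eq_card hli, Set.toFinset_image]
  rw [Finset.card_image_of_injective _ hu.linearIndependent.injective]
  simp

lemma exists_ne_zero_mem_inf {m : ℕ} (U V : Submodule ℂ (EuclideanSpace ℂ (Fin m)))
    (h : m < Module.finrank ℂ U + Module.finrank ℂ V) :
    ∃ x, x ≠ 0 ∧ x ∈ U ∧ x ∈ V := by
  have hsup : Module.finrank ℂ (U ⊔ V : Submodule ℂ _) ≤ m := by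
    simpa [finrank_euclideanSpace_fin] using Submodule.finrank_le (U ⊔ V)
  have := Submodule.finrank_sup_add_finrank_inf_eq U V
  have hpos : 0 < Module.finrank ℂ (U ⊓ V : Submodule ℂ _) := by omega
  have hne : (U ⊓ V : Submodule ℂ _) ≠ ⊥ := by
    intro hbot
    rw [hbot, finrank_bot] at hpos
    exact lt_irrefl 0 hpos
  obtain ⟨x, hx, hx0⟩ := Submodule.exists_mem_ne_zero_of_ne_bot hne
  exact ⟨x, hx0, hx.1, hx.2⟩

open Finset
open scoped InnerProductSpace ComplexConjugate

noncomputable def emb {n : ℕ} (y : EuclideanSpace ℂ (Fin n)) : EuclideanSpace ℂ (Fin (n+1)) :=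
  WithLp.toLp 2 (Fin.snoc (α := fun _ => ℂ) (WithLp.ofLp y) 0)

/-- Cauchy/Rayleigh interlacing for the eigenvalues of a Hermitian
matrix and of its principal `n × n` minor. -/
theorem stmt16 (n : ℕ) (M : Matrix (Fin (n + 1)) (Fin (n + 1)) ℂ) (hM : M.IsHermitian)
    (lam : Fin (n + 1) → ℝ) (beta : Fin n → ℝ)
    (hlam₁ : Antitone lam)
    (hlam₂ : M.charpoly = ∏ i : Fin (n + 1), (X - C ((lam i : ℝ) : ℂ)))
    (hbeta₁ : Antitone beta)
    (hbeta₂ : (M.submatrix Fin.castSucc Fin.castSucc).charpoly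
        = ∏ i : Fin n, (X - C ((beta i : ℝ) : ℂ))) :
    ∀ i : Fin n, lam i.succ ≤ beta i ∧ beta i ≤ lam i.castSucc := by
  classical
  have hB : (M.submatrix Fin.castSucc Fin.castSucc).IsHermitian :=
    hM.submatrix Fin.castSucc
  set B := M.submatrix Fin.castSucc Fin.castSucc with hBdef
  obtain ⟨σ, hσ⟩ := perm_of_prod_eq lam hM.eigenvalues hlam₁
    (by rw [← hlam₂, hermitian_charpoly_prod hM])
  obtain ⟨σ', hσ'⟩ := perm_of_prod_eq beta hB.eigenvalues hbeta₁
    (by rw [← hbeta₂, hermitian_charpoly_prod hB])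
  set T := Matrix.toEuclideanLin M with hT
  set v : Fin (n+1) → EuclideanSpace ℂ (Fin (n+1)) := fun j => hM.eigenvectorBasis (σ j) with hv
  have hvon : Orthonormal ℂ v := hM.eigenvectorBasis.orthonormal.comp σ σ.injective
  have hTb : ∀ j : Fin (n+1), T (hM.eigenvectorBasis j)
      = ((hM.eigenvalues j : ℝ) : ℂ) • hM.eigenvectorBasis j := by
    intro j
    have h := hM.mulVec_eigenvectorBasis j
    apply PiLp.ext
    intro k
    have hk := congrFun h k
    simpa [hT, Matrix.toEuclideanLin_apply, Complex.real_smul] using hk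
  have hvT : ∀ i j, ⟪v i, T (v j)⟫_ℂ = if i = j then ((lam i : ℝ) : ℂ) else 0 := by
    intro i j
    rw [hv]
    simp only []
    rw [hTb (σ j), inner_smul_right]
    rw [orthonormal_iff_ite.mp hM.eigenvectorBasis.orthonormal]
    by_cases hij : i = j
    · subst hij
      simp [hσ i]
    · have : σ i ≠ σ j := fun hc => hij (σ.injective hc)
      simp [this, hij]
  -- embedded minor family
  set u : Fin n → EuclideanSpace ℂ (Fin (n+1)) :=
    fun j => emb (hB.eigenvectorBasis (σ' j)) with hu
  have hemb_inner : ∀ y z : EuclideanSpace ℂ (Fin n), ⟪emb y, emb z⟫_ℂ = ⟪y, z⟫_ℂ := by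
    intro y z
    simp only [PiLp.inner_apply, RCLike.inner_apply]
    rw [Fin.sum_univ_castSucc]
    simp [emb]
  have hemb_T : ∀ y z : EuclideanSpace ℂ (Fin n),
      ⟪emb y, T (emb z)⟫_ℂ = ⟪y, Matrix.toEuclideanLin B z⟫_ℂ := by
    intro y z
    simp only [PiLp.inner_apply, RCLike.inner_apply]
    rw [Fin.sum_univ_castSucc]
    have hlast : (emb y) (Fin.last n) = 0 := by simp [emb]
    rw [hlast]
    simp only [map_zero, zero_mul, mul_zero, add_zero]
    apply Finset.sum_congr rfl
    intro k _
    congr 1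
    · simp only [hT, Matrix.toEuclideanLin_apply]
      show (M.mulVec (WithLp.ofLp (emb z))) (Fin.castSucc k) = (B.mulVec (WithLp.ofLp z)) k
      simp only [Matrix.mulVec, dotProduct]
      rw [Fin.sum_univ_castSucc]
      simp [emb, hBdef]
    · simp [emb]
  have huon : Orthonormal ℂ u := by
    rw [orthonormal_iff_ite]
    intro i j
    rw [hu]
    simp only []
    rw [hemb_inner, orthonormal_iff_ite.mp hB.eigenvectorBasis.orthonormal]
    by_cases hij : i = j
    · subst hij; simp
    · have : σ' i ≠ σ' j := fun hc => hij (σ'.injective hc)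
      simp [this, hij]
  have hTb' : ∀ j : Fin n, Matrix.toEuclideanLin B (hB.eigenvectorBasis j)
      = ((hB.eigenvalues j : ℝ) : ℂ) • hB.eigenvectorBasis j := by
    intro j
    have h := hB.mulVec_eigenvectorBasis j
    apply PiLp.ext
    intro k
    have hk := congrFun h k
    simpa [Matrix.toEuclideanLin_apply, Complex.real_smul] using hk
  have huT : ∀ i j, ⟪u i, T (u j)⟫_ℂ = if i = j then ((beta i : ℝ) : ℂ) else 0 := by
    intro i j
    rw [hu]
    simp only []
    rw [hemb_T, hTb' (σ' j), inner_smul_right,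
      orthonormal_iff_ite.mp hB.eigenvectorBasis.orthonormal]
    by_cases hij : i = j
    · subst hij; simp [hσ' i]
    · have : σ' i ≠ σ' j := fun hc => hij (σ'.injective hc)
      simp [this, hij]
  intro i
  -- generic comparison machinery
  have main : ∀ (s₁ : Finset (Fin n)) (s₂ : Finset (Fin (n+1))) (c₁ c₂ : ℝ),
      n + 1 < s₁.card + s₂.card →
      (∀ j ∈ s₁, c₁ ≤ beta j) → (∀ j ∈ s₂, lam j ≤ c₂) → c₁ ≤ c₂ := by
    intro s₁ s₂ c₁ c₂ hcard h₁ h₂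
    obtain ⟨x, hx0, hxu, hxv⟩ := exists_ne_zero_mem_inf
      (Submodule.span ℂ (u '' s₁)) (Submodule.span ℂ (v '' s₂))
      (by rw [finrank_span_on u huon s₁, finrank_span_on v hvon s₂]; omega)
    obtain ⟨d₁, hd₁0, hxn₁, hxT₁⟩ := rayleigh_span T u huon beta huT s₁ x hxu
    obtain ⟨d₂, hd₂0, hxn₂, hxT₂⟩ := rayleigh_span T v hvon lam hvT s₂ x hxv
    have hnorm : 0 < ‖x‖ ^ 2 := by
      have := norm_pos_iff.mpr hx0
      positivity
    have hle1 : c₁ * ‖x‖ ^ 2 ≤ (⟪x, T x⟫_ℂ).re := by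
      rw [hxT₁, hxn₁, Finset.mul_sum]
      apply Finset.sum_le_sum
      intro j hj
      exact mul_le_mul_of_nonneg_right (h₁ j hj) (hd₁0 j)
    have hle2 : (⟪x, T x⟫_ℂ).re ≤ c₂ * ‖x‖ ^ 2 := by
      rw [hxT₂, hxn₂, Finset.mul_sum]
      apply Finset.sum_le_sum
      intro j hj
      exact mul_le_mul_of_nonneg_right (h₂ j hj) (hd₂0 j)
    have := hle1.trans hle2
    exact le_of_mul_le_mul_right (by linarith [this]) hnorm
  have main2 : ∀ (s₁ : Finset (Fin n)) (s₂ : Finset (Fin (n+1))) (c₁ c₂ : ℝ),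
      n + 1 < s₁.card + s₂.card →
      (∀ j ∈ s₁, beta j ≤ c₂) → (∀ j ∈ s₂, c₁ ≤ lam j) → c₁ ≤ c₂ := by
    intro s₁ s₂ c₁ c₂ hcard h₁ h₂
    obtain ⟨x, hx0, hxu, hxv⟩ := exists_ne_zero_mem_inf
      (Submodule.span ℂ (u '' s₁)) (Submodule.span ℂ (v '' s₂))
      (by rw [finrank_span_on u huon s₁, finrank_span_on v hvon s₂]; omega)
    obtain ⟨d₁, hd₁0, hxn₁, hxT₁⟩ := rayleigh_span T u huon beta huT s₁ x hxu
    obtain ⟨d₂, hd₂0, hxn₂, hxT₂⟩ := rayleigh_span T v hvon lam hvT s₂ x hxv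
    have hnorm : 0 < ‖x‖ ^ 2 := by
      have := norm_pos_iff.mpr hx0
      positivity
    have hle1 : (⟪x, T x⟫_ℂ).re ≤ c₂ * ‖x‖ ^ 2 := by
      rw [hxT₁, hxn₁, Finset.mul_sum]
      apply Finset.sum_le_sum
      intro j hj
      exact mul_le_mul_of_nonneg_right (h₁ j hj) (hd₁0 j)
    have hle2 : c₁ * ‖x‖ ^ 2 ≤ (⟪x, T x⟫_ℂ).re := by
      rw [hxT₂, hxn₂, Finset.mul_sum]
      apply Finset.sum_le_sum
      intro j hj
      exact mul_le_mul_of_nonneg_right (h₂ j hj) (hd₂0 j)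
    have := hle2.trans hle1
    exact le_of_mul_le_mul_right (by linarith [this]) hnorm
  constructor
  · -- lam i.succ ≤ beta i
    refine main2 (Finset.Ici i) (Finset.Iic i.succ) (lam i.succ) (beta i) ?_ ?_ ?_
    · rw [Fin.card_Ici, Fin.card_Iic]
      have h1 : (i : ℕ) < n := i.isLt
      have h2 : ((i.succ : Fin (n+1)) : ℕ) = (i : ℕ) + 1 := rfl
      omega
    · intro j hj
      exact hbeta₁ (Finset.mem_Ici.mp hj)
    · intro j hj
      exact hlam₁ (Finset.mem_Iic.mp hj)
  · -- beta i ≤ lam i.castSucc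
    refine main (Finset.Iic i) (Finset.Ici i.castSucc) (beta i) (lam i.castSucc) ?_ ?_ ?_
    · rw [Fin.card_Iic, Fin.card_Ici]
      have h1 : (i : ℕ) < n := i.isLt
      have h2 : ((i.castSucc : Fin (n+1)) : ℕ) = (i : ℕ) := rfl
      omega
    · intro j hj
      exact hbeta₁ (Finset.mem_Iic.mp hj)
    · intro j hj
      exact hlam₁ (Finset.mem_Ici.mp hj)
end
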